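/- The snark P34 has no bold-edge; equivalently, for every vertex v of P34 there is a 2-factor of P34 − v containing a cycle of even length. -/

import Mathlib

open SimpleGraph

/-- A 2-factor of `G`: a 2-regular spanning subgraph. -/
def IsTwoFactor {V : Type*} (G H : SimpleGraph V) : Prop :=
  H ≤ G ∧ ∀ v, (H.neighborSet v).ncard = 2

/-- A perfect matching (1-factor) of `G`: a 1-regular spanning subgraph. -/
def IsOneFactor {V : Type*} (G M : SimpleGraph V) : Prop :=
  M ≤ G ∧ ∀ v, (M.neighborSet v).ncard = 1

/-- Every cycle of `H` has odd length. -/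
def AllCyclesOdd {V : Type*} (H : SimpleGraph V) : Prop :=
  ∀ (v : V) (p : H.Walk v v), p.IsCycle → Odd p.length

/-- `G` is odd 2-factored: every cycle of every 2-factor has odd length. -/
def OddTwoFactored {V : Type*} (G : SimpleGraph V) : Prop :=
  ∀ H, IsTwoFactor G H → AllCyclesOdd H

/-- `G` has a proper edge coloring with `n` colors. -/
def EdgeColorable {V : Type*} (G : SimpleGraph V) (n : ℕ) : Prop :=
  ∃ c : Sym2 V → Fin n, ∀ e₁ ∈ G.edgeSet, ∀ e₂ ∈ G.edgeSet,
    e₁ ≠ e₂ → (∃ v, v ∈ e₁ ∧ v ∈ e₂) → c e₁ ≠ c e₂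

/-- The induced subgraph of `G` on `A` contains a cycle. -/
def HasCycleIn {V : Type*} (G : SimpleGraph V) (A : Set V) : Prop :=
  ∃ (v : A) (p : (G.induce A).Walk v v), p.IsCycle

/-- Cyclic edge-connectivity at least `k`: every edge cut separating two
cycle-containing parts has at least `k` edges. -/
def CyclicEdgeConnGe {V : Type*} (G : SimpleGraph V) (k : ℕ) : Prop :=
  ∀ A : Set V, HasCycleIn G A → HasCycleIn G Aᶜ →
    k ≤ {e ∈ G.edgeSet | ∃ x ∈ A, ∃ y ∈ Aᶜ, e = s(x, y)}.ncard

/-- A snark: connected, cubic, girth at least 5, cyclically 4-edge-connected,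
edge chromatic number 4. -/
def IsSnark {V : Type*} (G : SimpleGraph V) : Prop :=
  G.Connected ∧
  (∀ v, (G.neighborSet v).ncard = 3) ∧
  (∀ (v : V) (p : G.Walk v v), p.IsCycle → 5 ≤ p.length) ∧
  CyclicEdgeConnGe G 4 ∧
  EdgeColorable G 4 ∧ ¬ EdgeColorable G 3

/-- A bold-edge `xy` of `G`. -/
def IsBoldEdge {V : Type*} (G : SimpleGraph V) (x y : V) : Prop :=
  G.Adj x y ∧
  (∀ H, IsTwoFactor (G.induce {w | w ≠ x}) H → AllCyclesOdd H) ∧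
  (∀ H, IsTwoFactor (G.induce {w | w ≠ y}) H → AllCyclesOdd H) ∧
  (∀ H, IsTwoFactor G H → H.Adj x y → AllCyclesOdd H) ∧
  (∀ H, IsTwoFactor G H → ¬ H.Adj x y → AllCyclesOdd H)

/-- The graph `(R − {ab, cd}) + {ac, ad, bc, bd}` of condition (iv) of gadget-pairs. -/
def GadgetAux {V : Type*} (R : SimpleGraph V) (a b c d : V) : SimpleGraph V :=
  (R.deleteEdges {s(a, b), s(c, d)}) ⊔
    SimpleGraph.fromEdgeSet {s(a, c), s(a, d), s(b, c), s(b, d)}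

/-- The pair of nonadjacent edges `ab`, `cd` of `R` is a gadget-pair. -/
def IsGadgetPair {V : Type*} (R : SimpleGraph V) (a b c d : V) : Prop :=
  R.Adj a b ∧ R.Adj c d ∧ a ≠ c ∧ a ≠ d ∧ b ≠ c ∧ b ≠ d ∧
  (∀ H, IsTwoFactor R H → H.Adj a b ∨ H.Adj c d) ∧
  (∀ H, IsTwoFactor R H →
    (H.Adj a b ∧ ¬ H.Adj c d) ∨ (¬ H.Adj a b ∧ H.Adj c d) → AllCyclesOdd H) ∧
  (∀ H, IsTwoFactor R H → H.Adj a b → H.Adj c d →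
    AllCyclesOdd H ∧ ¬ H.Reachable a c) ∧
  (∀ e' ∈ ({s(a, c), s(a, d), s(b, c), s(b, d)} : Set (Sym2 V)),
    ∀ H, IsTwoFactor (GadgetAux R a b c d) H → e' ∈ H.edgeSet →
      (∀ e'' ∈ ({s(a, c), s(a, d), s(b, c), s(b, d)} : Set (Sym2 V)),
        e'' ∈ H.edgeSet → e'' = e') →
      ∀ (v : V) (p : H.Walk v v), p.IsCycle →
        (e' ∈ p.edges → Even p.length) ∧ (e' ∉ p.edges → Odd p.length))
/-- The graph `P34`, 0-based labelling: vertex `k` corresponds to vertex `k+1`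
of the paper's labelling. -/
def P34 : SimpleGraph (Fin 34) :=
  SimpleGraph.fromEdgeSet
    {s(4,5), s(4,9), s(5,6), s(5,7), s(6,13), s(7,8), s(7,11), s(8,9), s(8,13),
     s(9,10), s(10,11), s(11,12), s(12,13), s(0,4), s(3,10), s(2,12), s(1,6),
     s(14,15), s(14,19), s(15,16), s(15,17), s(16,23), s(17,18), s(17,21),
     s(18,19), s(18,23), s(19,20), s(20,21), s(21,22), s(22,23), s(14,3),
     s(22,2), s(20,1), s(0,16), s(24,25), s(24,33), s(25,26), s(25,27),
     s(26,29), s(27,28), s(27,31), s(28,29), s(28,33), s(29,30), s(30,31),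
     s(31,32), s(32,33), s(32,1), s(26,2), s(30,3), s(0,24)}


-- ===== auxiliary machinery =====

def mkG (E : List (Fin 34 × Fin 34)) : SimpleGraph (Fin 34) where
  Adj a b := a ≠ b ∧ ((a,b) ∈ E ∨ (b,a) ∈ E)
  symm := ⟨fun _ _ ⟨h1,h2⟩ => ⟨h1.symm, h2.symm⟩⟩
  loopless := ⟨fun _ ⟨h,_⟩ => h rfl⟩

instance (E : List (Fin 34 × Fin 34)) : DecidableRel (mkG E).Adj :=
  fun _ _ => inferInstanceAs (Decidable (_ ∧ _))

def fullE : List (Fin 34 × Fin 34) :=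
  [(4,5),(4,9),(5,6),(5,7),(6,13),(7,8),(7,11),(8,9),(8,13),
   (9,10),(10,11),(11,12),(12,13),(0,4),(3,10),(2,12),(1,6),
   (14,15),(14,19),(15,16),(15,17),(16,23),(17,18),(17,21),
   (18,19),(18,23),(19,20),(20,21),(21,22),(22,23),(14,3),
   (22,2),(20,1),(0,16),(24,25),(24,33),(25,26),(25,27),
   (26,29),(27,28),(27,31),(28,29),(28,33),(29,30),(30,31),
   (31,32),(32,33),(32,1),(26,2),(30,3),(0,24)]

set_option synthInstance.maxSize 20000 in
set_option synthInstance.maxHeartbeats 4000000 in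
set_option maxHeartbeats 4000000 in
set_option maxRecDepth 100000 in
lemma P34_eq : P34 = mkG fullE := by
  ext a b
  simp only [P34, fromEdgeSet_adj, Set.mem_insert_iff, Set.mem_singleton_iff,
    Sym2.eq, Sym2.rel_iff', Prod.mk.injEq, Prod.swap_prod_mk, mkG, fullE, List.mem_cons,
    List.not_mem_nil, or_false, ne_eq]
  revert a b
  decide

def pairG (f g : Fin 34 → Fin 34) (v : Fin 34) :
    SimpleGraph {w : Fin 34 // w ∈ {w : Fin 34 | w ≠ v}} where
  Adj a b := a ≠ b ∧ (b.val = f a.val ∨ b.val = g a.val) ∧ (a.val = f b.val ∨ a.val = g b.val)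
  symm := ⟨fun _ _ ⟨h0,h1,h2⟩ => ⟨h0.symm, h2, h1⟩⟩
  loopless := ⟨fun _ ⟨h0,_⟩ => h0 rfl⟩

instance (f g : Fin 34 → Fin 34) (v : Fin 34) : DecidableRel (pairG f g v).Adj :=
  fun _ _ => inferInstanceAs (Decidable (_ ∧ _))

def Good (f g : Fin 34 → Fin 34) (v : Fin 34) : Prop :=
  ∀ a : Fin 34, a ≠ v →
    f a ≠ g a ∧ a ≠ f a ∧ a ≠ g a ∧ f a ≠ v ∧ g a ≠ v ∧
    (a = f (f a) ∨ a = g (f a)) ∧ (a = f (g a) ∨ a = g (g a)) ∧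
    (mkG fullE).Adj a (f a) ∧ (mkG fullE).Adj a (g a)

instance (f g : Fin 34 → Fin 34) (v : Fin 34) : Decidable (Good f g v) :=
  inferInstanceAs (Decidable (∀ _, _))

lemma good_twoFactor {f g : Fin 34 → Fin 34} {v : Fin 34} (h : Good f g v) :
    IsTwoFactor (P34.induce {w | w ≠ v}) (pairG f g v) := by
  constructor
  · rintro a b ⟨hne, h1, h2⟩
    obtain ⟨c1,c2,c3,c4,c5,c6,c7,c8,c9⟩ := h a.val a.property
    show P34.Adj a.val b.val
    rw [P34_eq]
    rcases h1 with h1 | h1 <;> rw [h1]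
    · exact c8
    · exact c9
  · intro x
    obtain ⟨c1,c2,c3,c4,c5,c6,c7,c8,c9⟩ := h x.val x.property
    have hset : (pairG f g v).neighborSet x =
        {(⟨f x.val, c4⟩ : {w : Fin 34 // w ∈ {w : Fin 34 | w ≠ v}}), ⟨g x.val, c5⟩} := by
      ext w
      simp only [mem_neighborSet, Set.mem_insert_iff, Set.mem_singleton_iff]
      constructor
      · rintro ⟨hne, h1 | h1, h2⟩
        · left; exact Subtype.ext h1
        · right; exact Subtype.ext h1
      · rintro (rfl | rfl)
        · exact ⟨fun hc => c2 (congrArg Subtype.val hc), Or.inl rfl, c6⟩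
        · exact ⟨fun hc => c3 (congrArg Subtype.val hc), Or.inr rfl, c7⟩
    rw [hset, Set.ncard_pair (fun hc => c1 (congrArg Subtype.val hc))]

def fT (T : List (Fin 34 × Fin 34)) : Fin 34 → Fin 34 := fun a => (T.getD a.val (0,0)).1
def gT (T : List (Fin 34 × Fin 34)) : Fin 34 → Fin 34 := fun a => (T.getD a.val (0,0)).2

def vtx (v n : Fin 34) (h : n ∈ {w : Fin 34 | w ≠ v} := by decide) :
    {w : Fin 34 // w ∈ {w : Fin 34 | w ≠ v}} := ⟨n, h⟩

def tbl0 : List (Fin 34 × Fin 34) := [(0, 0), (20, 32), (12, 26), (10, 14), (5, 9), (4, 6), (5, 13), (8, 11), (7, 9), (4, 8), (11, 3), (7, 10), (13, 2), (6, 12), (15, 3), (14, 16), (15, 23), (18, 21), (17, 19), (18, 20), (19, 1), (17, 22), (21, 23), (16, 22), (25, 33), (24, 26), (25, 2), (28, 31), (27, 29), (28, 30), (29, 31), (27, 30), (33, 1), (24, 32)]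
def wlk0 : (pairG (fT tbl0) (gT tbl0) 0).Walk (vtx 0 1) (vtx 0 1) :=
  (@Walk.cons _ _ (vtx 0 1) (vtx 0 20) _ (by decide) (@Walk.cons _ _ (vtx 0 20) (vtx 0 19) _ (by decide) (@Walk.cons _ _ (vtx 0 19) (vtx 0 18) _ (by decide) (@Walk.cons _ _ (vtx 0 18) (vtx 0 17) _ (by decide) (@Walk.cons _ _ (vtx 0 17) (vtx 0 21) _ (by decide) (@Walk.cons _ _ (vtx 0 21) (vtx 0 22) _ (by decide) (@Walk.cons _ _ (vtx 0 22) (vtx 0 23) _ (by decide) (@Walk.cons _ _ (vtx 0 23) (vtx 0 16) _ (by decide) (@Walk.cons _ _ (vtx 0 16) (vtx 0 15) _ (by decide) (@Walk.cons _ _ (vtx 0 15) (vtx 0 14) _ (by decide) (@Walk.cons _ _ (vtx 0 14) (vtx 0 3) _ (by decide) (@Walk.cons _ _ (vtx 0 3) (vtx 0 10) _ (by decide) (@Walk.cons _ _ (vtx 0 10) (vtx 0 11) _ (by decide) (@Walk.cons _ _ (vtx 0 11) (vtx 0 7) _ (by decide) (@Walk.cons _ _ (vtx 0 7) (vtx 0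 8) _ (by decide) (@Walk.cons _ _ (vtx 0 8) (vtx 0 9) _ (by decide) (@Walk.cons _ _ (vtx 0 9) (vtx 0 4) _ (by decide) (@Walk.cons _ _ (vtx 0 4) (vtx 0 5) _ (by decide) (@Walk.cons _ _ (vtx 0 5) (vtx 0 6) _ (by decide) (@Walk.cons _ _ (vtx 0 6) (vtx 0 13) _ (by decide) (@Walk.cons _ _ (vtx 0 13) (vtx 0 12) _ (by decide) (@Walk.cons _ _ (vtx 0 12) (vtx 0 2) _ (by decide) (@Walk.cons _ _ (vtx 0 2) (vtx 0 26) _ (by decide) (@Walk.cons _ _ (vtx 0 26) (vtx 0 25) _ (by decide) (@Walk.cons _ _ (vtx 0 25) (vtx 0 24) _ (by decide) (@Walk.cons _ _ (vtx 0 24) (vtx 0 33) _ (by decide) (@Walk.cons _ _ (vtx 0 33) (vtx 0 32) _ (by decide) (@Walk.cons _ _ (vtx 0 32) (vtx 0 1) _ (by decide) Walk.nil))))))))))))))))))))))))))))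
lemma case0 : ∃ H, IsTwoFactor (P34.induce {w | w ≠ (0:Fin 34)}) H ∧
    ∃ (u : {w : Fin 34 // w ∈ {w : Fin 34 | w ≠ (0:Fin 34)}}) (p : H.Walk u u),
      p.IsCycle ∧ Even p.length := by
  refine ⟨pairG (fT tbl0) (gT tbl0) 0, good_twoFactor (by decide), vtx 0 1, wlk0, ?_, by decide⟩
  rw [Walk.isCycle_def, Walk.isTrail_def]
  exact ⟨by decide, fun h => absurd (congrArg Walk.length h) (by decide), by decide⟩

def tbl1 : List (Fin 34 × Fin 34) := [(16, 24), (0, 0), (12, 22), (10, 30), (5, 9), (4, 6), (5, 13), (8, 11), (7, 9), (4, 8), (11, 3), (7, 10), (13, 2), (6, 12), (15, 19), (14, 16), (15, 0), (18, 21), (17, 23), (14, 20), (19, 21), (17, 20), (23, 2), (18, 22), (25, 0), (24, 26), (25, 29), (28, 31), (27, 33), (26, 30), (29, 3), (27, 32), (31, 33), (28, 32)]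
def wlk1 : (pairG (fT tbl1) (gT tbl1) 1).Walk (vtx 1 0) (vtx 1 0) :=
  (@Walk.cons _ _ (vtx 1 0) (vtx 1 16) _ (by decide) (@Walk.cons _ _ (vtx 1 16) (vtx 1 15) _ (by decide) (@Walk.cons _ _ (vtx 1 15) (vtx 1 14) _ (by decide) (@Walk.cons _ _ (vtx 1 14) (vtx 1 19) _ (by decide) (@Walk.cons _ _ (vtx 1 19) (vtx 1 20) _ (by decide) (@Walk.cons _ _ (vtx 1 20) (vtx 1 21) _ (by decide) (@Walk.cons _ _ (vtx 1 21) (vtx 1 17) _ (by decide) (@Walk.cons _ _ (vtx 1 17) (vtx 1 18) _ (by decide) (@Walk.cons _ _ (vtx 1 18) (vtx 1 23) _ (by decide) (@Walk.cons _ _ (vtx 1 23) (vtx 1 22) _ (by decide) (@Walk.cons _ _ (vtx 1 22) (vtx 1 2) _ (by decide) (@Walk.cons _ _ (vtx 1 2) (vtx 1 12) _ (by decide) (@Walk.cons _ _ (vtx 1 12) (vtx 1 13) _ (by decide) (@Walk.cons _ _ (vtx 1 13) (vtx 1 6) _ (by decide) (@Walk.cons _ _ (vtx 1 6) (vtx 1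 5) _ (by decide) (@Walk.cons _ _ (vtx 1 5) (vtx 1 4) _ (by decide) (@Walk.cons _ _ (vtx 1 4) (vtx 1 9) _ (by decide) (@Walk.cons _ _ (vtx 1 9) (vtx 1 8) _ (by decide) (@Walk.cons _ _ (vtx 1 8) (vtx 1 7) _ (by decide) (@Walk.cons _ _ (vtx 1 7) (vtx 1 11) _ (by decide) (@Walk.cons _ _ (vtx 1 11) (vtx 1 10) _ (by decide) (@Walk.cons _ _ (vtx 1 10) (vtx 1 3) _ (by decide) (@Walk.cons _ _ (vtx 1 3) (vtx 1 30) _ (by decide) (@Walk.cons _ _ (vtx 1 30) (vtx 1 29) _ (by decide) (@Walk.cons _ _ (vtx 1 29) (vtx 1 26) _ (by decide) (@Walk.cons _ _ (vtx 1 26) (vtx 1 25) _ (by decide) (@Walk.cons _ _ (vtx 1 25) (vtx 1 24) _ (by decide) (@Walk.cons _ _ (vtx 1 24) (vtx 1 0) _ (by decide) Walk.nil))))))))))))))))))))))))))))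
lemma case1 : ∃ H, IsTwoFactor (P34.induce {w | w ≠ (1:Fin 34)}) H ∧
    ∃ (u : {w : Fin 34 // w ∈ {w : Fin 34 | w ≠ (1:Fin 34)}}) (p : H.Walk u u),
      p.IsCycle ∧ Even p.length := by
  refine ⟨pairG (fT tbl1) (gT tbl1) 1, good_twoFactor (by decide), vtx 1 0, wlk1, ?_, by decide⟩
  rw [Walk.isCycle_def, Walk.isTrail_def]
  exact ⟨by decide, fun h => absurd (congrArg Walk.length h) (by decide), by decide⟩

def tbl2 : List (Fin 34 × Fin 34) := [(16, 24), (6, 20), (0, 0), (10, 30), (5, 9), (4, 6), (5, 1), (8, 11), (7, 13), (4, 10), (9, 3), (7, 12), (11, 13), (8, 12), (15, 19), (14, 16), (15, 0), (18, 21), (17, 23), (14, 20), (19, 1), (17, 22), (21, 23), (18, 22), (25, 0), (24, 26), (25, 29), (28, 31), (27, 33), (26, 30), (29, 3), (27, 32), (31, 33), (28, 32)]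
def wlk2 : (pairG (fT tbl2) (gT tbl2) 2).Walk (vtx 2 0) (vtx 2 0) :=
  (@Walk.cons _ _ (vtx 2 0) (vtx 2 16) _ (by decide) (@Walk.cons _ _ (vtx 2 16) (vtx 2 15) _ (by decide) (@Walk.cons _ _ (vtx 2 15) (vtx 2 14) _ (by decide) (@Walk.cons _ _ (vtx 2 14) (vtx 2 19) _ (by decide) (@Walk.cons _ _ (vtx 2 19) (vtx 2 20) _ (by decide) (@Walk.cons _ _ (vtx 2 20) (vtx 2 1) _ (by decide) (@Walk.cons _ _ (vtx 2 1) (vtx 2 6) _ (by decide) (@Walk.cons _ _ (vtx 2 6) (vtx 2 5) _ (by decide) (@Walk.cons _ _ (vtx 2 5) (vtx 2 4) _ (by decide) (@Walk.cons _ _ (vtx 2 4) (vtx 2 9) _ (by decide) (@Walk.cons _ _ (vtx 2 9) (vtx 2 10) _ (by decide) (@Walk.cons _ _ (vtx 2 10) (vtx 2 3) _ (by decide) (@Walk.cons _ _ (vtx 2 3) (vtx 2 30) _ (by decide) (@Walk.cons _ _ (vtx 2 30) (vtx 2 29) _ (by decide) (@Walk.cons _ _ (vtx 2 29) (vtx 2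 26) _ (by decide) (@Walk.cons _ _ (vtx 2 26) (vtx 2 25) _ (by decide) (@Walk.cons _ _ (vtx 2 25) (vtx 2 24) _ (by decide) (@Walk.cons _ _ (vtx 2 24) (vtx 2 0) _ (by decide) Walk.nil))))))))))))))))))
lemma case2 : ∃ H, IsTwoFactor (P34.induce {w | w ≠ (2:Fin 34)}) H ∧
    ∃ (u : {w : Fin 34 // w ∈ {w : Fin 34 | w ≠ (2:Fin 34)}}) (p : H.Walk u u),
      p.IsCycle ∧ Even p.length := by
  refine ⟨pairG (fT tbl2) (gT tbl2) 2, good_twoFactor (by decide), vtx 2 0, wlk2, ?_, by decide⟩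
  rw [Walk.isCycle_def, Walk.isTrail_def]
  exact ⟨by decide, fun h => absurd (congrArg Walk.length h) (by decide), by decide⟩

def tbl3 : List (Fin 34 × Fin 34) := [(16, 24), (6, 20), (12, 26), (0, 0), (5, 9), (4, 6), (5, 1), (8, 11), (7, 13), (4, 10), (9, 11), (7, 10), (13, 2), (8, 12), (15, 19), (14, 16), (15, 0), (18, 21), (17, 23), (14, 20), (19, 1), (17, 22), (21, 23), (18, 22), (25, 0), (24, 27), (29, 2), (25, 28), (27, 33), (26, 30), (29, 31), (30, 32), (31, 33), (28, 32)]
def wlk3 : (pairG (fT tbl3) (gT tbl3) 3).Walk (vtx 3 0) (vtx 3 0) :=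
  (@Walk.cons _ _ (vtx 3 0) (vtx 3 16) _ (by decide) (@Walk.cons _ _ (vtx 3 16) (vtx 3 15) _ (by decide) (@Walk.cons _ _ (vtx 3 15) (vtx 3 14) _ (by decide) (@Walk.cons _ _ (vtx 3 14) (vtx 3 19) _ (by decide) (@Walk.cons _ _ (vtx 3 19) (vtx 3 20) _ (by decide) (@Walk.cons _ _ (vtx 3 20) (vtx 3 1) _ (by decide) (@Walk.cons _ _ (vtx 3 1) (vtx 3 6) _ (by decide) (@Walk.cons _ _ (vtx 3 6) (vtx 3 5) _ (by decide) (@Walk.cons _ _ (vtx 3 5) (vtx 3 4) _ (by decide) (@Walk.cons _ _ (vtx 3 4) (vtx 3 9) _ (by decide) (@Walk.cons _ _ (vtx 3 9) (vtx 3 10) _ (by decide) (@Walk.cons _ _ (vtx 3 10) (vtx 3 11) _ (by decide) (@Walk.cons _ _ (vtx 3 11) (vtx 3 7) _ (by decide) (@Walk.cons _ _ (vtx 3 7) (vtx 3 8) _ (by decide) (@Walk.cons _ _ (vtx 3 8) (vtx 3 13) _ (by decide) (@Walk.cons _ _ (vtx 3 13) (vtx 3 12) _ (by decide) (@Walk.cons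 _ _ (vtx 3 12) (vtx 3 2) _ (by decide) (@Walk.cons _ _ (vtx 3 2) (vtx 3 26) _ (by decide) (@Walk.cons _ _ (vtx 3 26) (vtx 3 29) _ (by decide) (@Walk.cons _ _ (vtx 3 29) (vtx 3 30) _ (by decide) (@Walk.cons _ _ (vtx 3 30) (vtx 3 31) _ (by decide) (@Walk.cons _ _ (vtx 3 31) (vtx 3 32) _ (by decide) (@Walk.cons _ _ (vtx 3 32) (vtx 3 33) _ (by decide) (@Walk.cons _ _ (vtx 3 33) (vtx 3 28) _ (by decide) (@Walk.cons _ _ (vtx 3 28) (vtx 3 27) _ (by decide) (@Walk.cons _ _ (vtx 3 27) (vtx 3 25) _ (by decide) (@Walk.cons _ _ (vtx 3 25) (vtx 3 24) _ (by decide) (@Walk.cons _ _ (vtx 3 24) (vtx 3 0) _ (by decide) Walk.nil))))))))))))))))))))))))))))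
lemma case3 : ∃ H, IsTwoFactor (P34.induce {w | w ≠ (3:Fin 34)}) H ∧
    ∃ (u : {w : Fin 34 // w ∈ {w : Fin 34 | w ≠ (3:Fin 34)}}) (p : H.Walk u u),
      p.IsCycle ∧ Even p.length := by
  refine ⟨pairG (fT tbl3) (gT tbl3) 3, good_twoFactor (by decide), vtx 3 0, wlk3, ?_, by decide⟩
  rw [Walk.isCycle_def, Walk.isTrail_def]
  exact ⟨by decide, fun h => absurd (congrArg Walk.length h) (by decide), by decide⟩

def tbl4 : List (Fin 34 × Fin 34) := [(16, 24), (20, 32), (22, 26), (14, 30), (0, 0), (6, 7), (5, 13), (5, 8), (7, 9), (8, 10), (9, 11), (10, 12), (11, 13), (6, 12), (15, 3), (14, 17), (23, 0), (15, 21), (19, 23), (18, 20), (19, 1), (17, 22), (21, 2), (16, 18), (25, 0), (24, 27), (29, 2), (25, 31), (29, 33), (26, 28), (31, 3), (27, 30), (33, 1), (28, 32)]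
def wlk4 : (pairG (fT tbl4) (gT tbl4) 4).Walk (vtx 4 0) (vtx 4 0) :=
  (@Walk.cons _ _ (vtx 4 0) (vtx 4 16) _ (by decide) (@Walk.cons _ _ (vtx 4 16) (vtx 4 23) _ (by decide) (@Walk.cons _ _ (vtx 4 23) (vtx 4 18) _ (by decide) (@Walk.cons _ _ (vtx 4 18) (vtx 4 19) _ (by decide) (@Walk.cons _ _ (vtx 4 19) (vtx 4 20) _ (by decide) (@Walk.cons _ _ (vtx 4 20) (vtx 4 1) _ (by decide) (@Walk.cons _ _ (vtx 4 1) (vtx 4 32) _ (by decide) (@Walk.cons _ _ (vtx 4 32) (vtx 4 33) _ (by decide) (@Walk.cons _ _ (vtx 4 33) (vtx 4 28) _ (by decide) (@Walk.cons _ _ (vtx 4 28) (vtx 4 29) _ (by decide) (@Walk.cons _ _ (vtx 4 29) (vtx 4 26) _ (by decide) (@Walk.cons _ _ (vtx 4 26) (vtx 4 2) _ (by decide) (@Walk.cons _ _ (vtx 4 2) (vtx 4 22) _ (by decide) (@Walk.cons _ _ (vtx 4 22) (vtx 4 21) _ (by decide) (@Walk.cons _ _ (vtx 4 21) (vtx 4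 17) _ (by decide) (@Walk.cons _ _ (vtx 4 17) (vtx 4 15) _ (by decide) (@Walk.cons _ _ (vtx 4 15) (vtx 4 14) _ (by decide) (@Walk.cons _ _ (vtx 4 14) (vtx 4 3) _ (by decide) (@Walk.cons _ _ (vtx 4 3) (vtx 4 30) _ (by decide) (@Walk.cons _ _ (vtx 4 30) (vtx 4 31) _ (by decide) (@Walk.cons _ _ (vtx 4 31) (vtx 4 27) _ (by decide) (@Walk.cons _ _ (vtx 4 27) (vtx 4 25) _ (by decide) (@Walk.cons _ _ (vtx 4 25) (vtx 4 24) _ (by decide) (@Walk.cons _ _ (vtx 4 24) (vtx 4 0) _ (by decide) Walk.nil))))))))))))))))))))))))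
lemma case4 : ∃ H, IsTwoFactor (P34.induce {w | w ≠ (4:Fin 34)}) H ∧
    ∃ (u : {w : Fin 34 // w ∈ {w : Fin 34 | w ≠ (4:Fin 34)}}) (p : H.Walk u u),
      p.IsCycle ∧ Even p.length := by
  refine ⟨pairG (fT tbl4) (gT tbl4) 4, good_twoFactor (by decide), vtx 4 0, wlk4, ?_, by decide⟩
  rw [Walk.isCycle_def, Walk.isTrail_def]
  exact ⟨by decide, fun h => absurd (congrArg Walk.length h) (by decide), by decide⟩

def tbl5 : List (Fin 34 × Fin 34) := [(4, 16), (6, 20), (12, 26), (10, 30), (9, 0), (0, 0), (13, 1), (8, 11), (7, 9), (4, 8), (11, 3), (7, 10), (13, 2), (6, 12), (15, 19), (14, 16), (15, 0), (18, 21), (17, 23), (14, 20), (19, 1), (17, 22), (21, 23), (18, 22), (25, 33), (24, 26), (25, 2), (28, 31), (27, 29), (28, 30), (29, 3), (27, 32), (31, 33), (24, 32)]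
def wlk5 : (pairG (fT tbl5) (gT tbl5) 5).Walk (vtx 5 0) (vtx 5 0) :=
  (@Walk.cons _ _ (vtx 5 0) (vtx 5 4) _ (by decide) (@Walk.cons _ _ (vtx 5 4) (vtx 5 9) _ (by decide) (@Walk.cons _ _ (vtx 5 9) (vtx 5 8) _ (by decide) (@Walk.cons _ _ (vtx 5 8) (vtx 5 7) _ (by decide) (@Walk.cons _ _ (vtx 5 7) (vtx 5 11) _ (by decide) (@Walk.cons _ _ (vtx 5 11) (vtx 5 10) _ (by decide) (@Walk.cons _ _ (vtx 5 10) (vtx 5 3) _ (by decide) (@Walk.cons _ _ (vtx 5 3) (vtx 5 30) _ (by decide) (@Walk.cons _ _ (vtx 5 30) (vtx 5 29) _ (by decide) (@Walk.cons _ _ (vtx 5 29) (vtx 5 28) _ (by decide) (@Walk.cons _ _ (vtx 5 28) (vtx 5 27) _ (by decide) (@Walk.cons _ _ (vtx 5 27) (vtx 5 31) _ (by decide) (@Walk.cons _ _ (vtx 5 31) (vtx 5 32) _ (by decide) (@Walk.cons _ _ (vtx 5 32) (vtx 5 33) _ (by decide) (@Walk.cons _ _ (vtx 5 33) (vtx 5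 24) _ (by decide) (@Walk.cons _ _ (vtx 5 24) (vtx 5 25) _ (by decide) (@Walk.cons _ _ (vtx 5 25) (vtx 5 26) _ (by decide) (@Walk.cons _ _ (vtx 5 26) (vtx 5 2) _ (by decide) (@Walk.cons _ _ (vtx 5 2) (vtx 5 12) _ (by decide) (@Walk.cons _ _ (vtx 5 12) (vtx 5 13) _ (by decide) (@Walk.cons _ _ (vtx 5 13) (vtx 5 6) _ (by decide) (@Walk.cons _ _ (vtx 5 6) (vtx 5 1) _ (by decide) (@Walk.cons _ _ (vtx 5 1) (vtx 5 20) _ (by decide) (@Walk.cons _ _ (vtx 5 20) (vtx 5 19) _ (by decide) (@Walk.cons _ _ (vtx 5 19) (vtx 5 14) _ (by decide) (@Walk.cons _ _ (vtx 5 14) (vtx 5 15) _ (by decide) (@Walk.cons _ _ (vtx 5 15) (vtx 5 16) _ (by decide) (@Walk.cons _ _ (vtx 5 16) (vtx 5 0) _ (by decide) Walk.nil))))))))))))))))))))))))))))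
lemma case5 : ∃ H, IsTwoFactor (P34.induce {w | w ≠ (5:Fin 34)}) H ∧
    ∃ (u : {w : Fin 34 // w ∈ {w : Fin 34 | w ≠ (5:Fin 34)}}) (p : H.Walk u u),
      p.IsCycle ∧ Even p.length := by
  refine ⟨pairG (fT tbl5) (gT tbl5) 5, good_twoFactor (by decide), vtx 5 0, wlk5, ?_, by decide⟩
  rw [Walk.isCycle_def, Walk.isTrail_def]
  exact ⟨by decide, fun h => absurd (congrArg Walk.length h) (by decide), by decide⟩

def tbl6 : List (Fin 34 × Fin 34) := [(16, 24), (20, 32), (22, 26), (14, 30), (5, 9), (4, 7), (0, 0), (5, 8), (7, 13), (4, 10), (9, 11), (10, 12), (11, 13), (8, 12), (15, 3), (14, 17), (23, 0), (15, 21), (19, 23), (18, 20), (19, 1), (17, 22), (21, 2), (16, 18), (25, 0), (24, 27), (29, 2), (25, 31), (29, 33), (26, 28), (31, 3), (27, 30), (33, 1), (28, 32)]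
def wlk6 : (pairG (fT tbl6) (gT tbl6) 6).Walk (vtx 6 0) (vtx 6 0) :=
  (@Walk.cons _ _ (vtx 6 0) (vtx 6 16) _ (by decide) (@Walk.cons _ _ (vtx 6 16) (vtx 6 23) _ (by decide) (@Walk.cons _ _ (vtx 6 23) (vtx 6 18) _ (by decide) (@Walk.cons _ _ (vtx 6 18) (vtx 6 19) _ (by decide) (@Walk.cons _ _ (vtx 6 19) (vtx 6 20) _ (by decide) (@Walk.cons _ _ (vtx 6 20) (vtx 6 1) _ (by decide) (@Walk.cons _ _ (vtx 6 1) (vtx 6 32) _ (by decide) (@Walk.cons _ _ (vtx 6 32) (vtx 6 33) _ (by decide) (@Walk.cons _ _ (vtx 6 33) (vtx 6 28) _ (by decide) (@Walk.cons _ _ (vtx 6 28) (vtx 6 29) _ (by decide) (@Walk.cons _ _ (vtx 6 29) (vtx 6 26) _ (by decide) (@Walk.cons _ _ (vtx 6 26) (vtx 6 2) _ (by decide) (@Walk.cons _ _ (vtx 6 2) (vtx 6 22) _ (by decide) (@Walk.cons _ _ (vtx 6 22) (vtx 6 21) _ (by decide) (@Walk.cons _ _ (vtx 6 21) (vtx 6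 17) _ (by decide) (@Walk.cons _ _ (vtx 6 17) (vtx 6 15) _ (by decide) (@Walk.cons _ _ (vtx 6 15) (vtx 6 14) _ (by decide) (@Walk.cons _ _ (vtx 6 14) (vtx 6 3) _ (by decide) (@Walk.cons _ _ (vtx 6 3) (vtx 6 30) _ (by decide) (@Walk.cons _ _ (vtx 6 30) (vtx 6 31) _ (by decide) (@Walk.cons _ _ (vtx 6 31) (vtx 6 27) _ (by decide) (@Walk.cons _ _ (vtx 6 27) (vtx 6 25) _ (by decide) (@Walk.cons _ _ (vtx 6 25) (vtx 6 24) _ (by decide) (@Walk.cons _ _ (vtx 6 24) (vtx 6 0) _ (by decide) Walk.nil))))))))))))))))))))))))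
lemma case6 : ∃ H, IsTwoFactor (P34.induce {w | w ≠ (6:Fin 34)}) H ∧
    ∃ (u : {w : Fin 34 // w ∈ {w : Fin 34 | w ≠ (6:Fin 34)}}) (p : H.Walk u u),
      p.IsCycle ∧ Even p.length := by
  refine ⟨pairG (fT tbl6) (gT tbl6) 6, good_twoFactor (by decide), vtx 6 0, wlk6, ?_, by decide⟩
  rw [Walk.isCycle_def, Walk.isTrail_def]
  exact ⟨by decide, fun h => absurd (congrArg Walk.length h) (by decide), by decide⟩

def tbl7 : List (Fin 34 × Fin 34) := [(16, 24), (20, 32), (12, 26), (10, 30), (5, 9), (4, 6), (5, 13), (0, 0), (9, 13), (4, 8), (11, 3), (10, 12), (11, 2), (6, 8), (15, 19), (14, 16), (15, 0), (18, 21), (17, 23), (14, 20), (19, 1), (17, 22), (21, 23), (18, 22), (25, 0), (24, 27), (29, 2), (25, 31), (29, 33), (26, 28), (31, 3), (27, 30), (33, 1), (28, 32)]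
def wlk7 : (pairG (fT tbl7) (gT tbl7) 7).Walk (vtx 7 0) (vtx 7 0) :=
  (@Walk.cons _ _ (vtx 7 0) (vtx 7 16) _ (by decide) (@Walk.cons _ _ (vtx 7 16) (vtx 7 15) _ (by decide) (@Walk.cons _ _ (vtx 7 15) (vtx 7 14) _ (by decide) (@Walk.cons _ _ (vtx 7 14) (vtx 7 19) _ (by decide) (@Walk.cons _ _ (vtx 7 19) (vtx 7 20) _ (by decide) (@Walk.cons _ _ (vtx 7 20) (vtx 7 1) _ (by decide) (@Walk.cons _ _ (vtx 7 1) (vtx 7 32) _ (by decide) (@Walk.cons _ _ (vtx 7 32) (vtx 7 33) _ (by decide) (@Walk.cons _ _ (vtx 7 33) (vtx 7 28) _ (by decide) (@Walk.cons _ _ (vtx 7 28) (vtx 7 29) _ (by decide) (@Walk.cons _ _ (vtx 7 29) (vtx 7 26) _ (by decide) (@Walk.cons _ _ (vtx 7 26) (vtx 7 2) _ (by decide) (@Walk.cons _ _ (vtx 7 2) (vtx 7 12) _ (by decide) (@Walk.cons _ _ (vtx 7 12) (vtx 7 11) _ (by decide) (@Walk.cons _ _ (vtx 7 11) (vtx 7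 10) _ (by decide) (@Walk.cons _ _ (vtx 7 10) (vtx 7 3) _ (by decide) (@Walk.cons _ _ (vtx 7 3) (vtx 7 30) _ (by decide) (@Walk.cons _ _ (vtx 7 30) (vtx 7 31) _ (by decide) (@Walk.cons _ _ (vtx 7 31) (vtx 7 27) _ (by decide) (@Walk.cons _ _ (vtx 7 27) (vtx 7 25) _ (by decide) (@Walk.cons _ _ (vtx 7 25) (vtx 7 24) _ (by decide) (@Walk.cons _ _ (vtx 7 24) (vtx 7 0) _ (by decide) Walk.nil))))))))))))))))))))))
lemma case7 : ∃ H, IsTwoFactor (P34.induce {w | w ≠ (7:Fin 34)}) H ∧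
    ∃ (u : {w : Fin 34 // w ∈ {w : Fin 34 | w ≠ (7:Fin 34)}}) (p : H.Walk u u),
      p.IsCycle ∧ Even p.length := by
  refine ⟨pairG (fT tbl7) (gT tbl7) 7, good_twoFactor (by decide), vtx 7 0, wlk7, ?_, by decide⟩
  rw [Walk.isCycle_def, Walk.isTrail_def]
  exact ⟨by decide, fun h => absurd (congrArg Walk.length h) (by decide), by decide⟩

def tbl8 : List (Fin 34 × Fin 34) := [(16, 24), (6, 32), (12, 26), (14, 30), (5, 9), (4, 7), (13, 1), (5, 11), (0, 0), (4, 10), (9, 11), (7, 10), (13, 2), (6, 12), (15, 3), (14, 17), (23, 0), (15, 18), (17, 19), (18, 20), (19, 21), (20, 22), (21, 23), (16, 22), (25, 0), (24, 27), (29, 2), (25, 31), (29, 33), (26, 28), (31, 3), (27, 30), (33, 1), (28, 32)]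
def wlk8 : (pairG (fT tbl8) (gT tbl8) 8).Walk (vtx 8 1) (vtx 8 1) :=
  (@Walk.cons _ _ (vtx 8 1) (vtx 8 6) _ (by decide) (@Walk.cons _ _ (vtx 8 6) (vtx 8 13) _ (by decide) (@Walk.cons _ _ (vtx 8 13) (vtx 8 12) _ (by decide) (@Walk.cons _ _ (vtx 8 12) (vtx 8 2) _ (by decide) (@Walk.cons _ _ (vtx 8 2) (vtx 8 26) _ (by decide) (@Walk.cons _ _ (vtx 8 26) (vtx 8 29) _ (by decide) (@Walk.cons _ _ (vtx 8 29) (vtx 8 28) _ (by decide) (@Walk.cons _ _ (vtx 8 28) (vtx 8 33) _ (by decide) (@Walk.cons _ _ (vtx 8 33) (vtx 8 32) _ (by decide) (@Walk.cons _ _ (vtx 8 32) (vtx 8 1) _ (by decide) Walk.nil))))))))))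
lemma case8 : ∃ H, IsTwoFactor (P34.induce {w | w ≠ (8:Fin 34)}) H ∧
    ∃ (u : {w : Fin 34 // w ∈ {w : Fin 34 | w ≠ (8:Fin 34)}}) (p : H.Walk u u),
      p.IsCycle ∧ Even p.length := by
  refine ⟨pairG (fT tbl8) (gT tbl8) 8, good_twoFactor (by decide), vtx 8 1, wlk8, ?_, by decide⟩
  rw [Walk.isCycle_def, Walk.isTrail_def]
  exact ⟨by decide, fun h => absurd (congrArg Walk.length h) (by decide), by decide⟩

def tbl9 : List (Fin 34 × Fin 34) := [(4, 24), (6, 20), (12, 22), (10, 30), (5, 0), (4, 6), (5, 1), (8, 11), (7, 13), (0, 0), (11, 3), (7, 10), (13, 2), (8, 12), (15, 19), (14, 16), (15, 23), (18, 21), (17, 19), (14, 18), (21, 1), (17, 20), (23, 2), (16, 22), (25, 0), (24, 26), (25, 29), (28, 31), (27, 33), (26, 30), (29, 3), (27, 32), (31, 33), (28, 32)]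
def wlk9 : (pairG (fT tbl9) (gT tbl9) 9).Walk (vtx 9 0) (vtx 9 0) :=
  (@Walk.cons _ _ (vtx 9 0) (vtx 9 4) _ (by decide) (@Walk.cons _ _ (vtx 9 4) (vtx 9 5) _ (by decide) (@Walk.cons _ _ (vtx 9 5) (vtx 9 6) _ (by decide) (@Walk.cons _ _ (vtx 9 6) (vtx 9 1) _ (by decide) (@Walk.cons _ _ (vtx 9 1) (vtx 9 20) _ (by decide) (@Walk.cons _ _ (vtx 9 20) (vtx 9 21) _ (by decide) (@Walk.cons _ _ (vtx 9 21) (vtx 9 17) _ (by decide) (@Walk.cons _ _ (vtx 9 17) (vtx 9 18) _ (by decide) (@Walk.cons _ _ (vtx 9 18) (vtx 9 19) _ (by decide) (@Walk.cons _ _ (vtx 9 19) (vtx 9 14) _ (by decide) (@Walk.cons _ _ (vtx 9 14) (vtx 9 15) _ (by decide) (@Walk.cons _ _ (vtx 9 15) (vtx 9 16) _ (by decide) (@Walk.cons _ _ (vtx 9 16) (vtx 9 23) _ (by decide) (@Walk.cons _ _ (vtx 9 23) (vtx 9 22) _ (by decide) (@Walk.cons _ _ (vtx 9 22) (vtx 9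 2) _ (by decide) (@Walk.cons _ _ (vtx 9 2) (vtx 9 12) _ (by decide) (@Walk.cons _ _ (vtx 9 12) (vtx 9 13) _ (by decide) (@Walk.cons _ _ (vtx 9 13) (vtx 9 8) _ (by decide) (@Walk.cons _ _ (vtx 9 8) (vtx 9 7) _ (by decide) (@Walk.cons _ _ (vtx 9 7) (vtx 9 11) _ (by decide) (@Walk.cons _ _ (vtx 9 11) (vtx 9 10) _ (by decide) (@Walk.cons _ _ (vtx 9 10) (vtx 9 3) _ (by decide) (@Walk.cons _ _ (vtx 9 3) (vtx 9 30) _ (by decide) (@Walk.cons _ _ (vtx 9 30) (vtx 9 29) _ (by decide) (@Walk.cons _ _ (vtx 9 29) (vtx 9 26) _ (by decide) (@Walk.cons _ _ (vtx 9 26) (vtx 9 25) _ (by decide) (@Walk.cons _ _ (vtx 9 25) (vtx 9 24) _ (by decide) (@Walk.cons _ _ (vtx 9 24) (vtx 9 0) _ (by decide) Walk.nil))))))))))))))))))))))))))))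
lemma case9 : ∃ H, IsTwoFactor (P34.induce {w | w ≠ (9:Fin 34)}) H ∧
    ∃ (u : {w : Fin 34 // w ∈ {w : Fin 34 | w ≠ (9:Fin 34)}}) (p : H.Walk u u),
      p.IsCycle ∧ Even p.length := by
  refine ⟨pairG (fT tbl9) (gT tbl9) 9, good_twoFactor (by decide), vtx 9 0, wlk9, ?_, by decide⟩
  rw [Walk.isCycle_def, Walk.isTrail_def]
  exact ⟨by decide, fun h => absurd (congrArg Walk.length h) (by decide), by decide⟩

def tbl10 : List (Fin 34 × Fin 34) := [(16, 24), (20, 32), (22, 26), (14, 30), (5, 9), (4, 6), (5, 13), (8, 11), (7, 9), (4, 8), (0, 0), (7, 12), (11, 13), (6, 12), (15, 3), (14, 17), (23, 0), (15, 21), (19, 23), (18, 20), (19, 1), (17, 22), (21, 2), (16, 18), (25, 0), (24, 27), (29, 2), (25, 31), (29, 33), (26, 28), (31, 3), (27, 30), (33, 1), (28, 32)]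
def wlk10 : (pairG (fT tbl10) (gT tbl10) 10).Walk (vtx 10 0) (vtx 10 0) :=
  (@Walk.cons _ _ (vtx 10 0) (vtx 10 16) _ (by decide) (@Walk.cons _ _ (vtx 10 16) (vtx 10 23) _ (by decide) (@Walk.cons _ _ (vtx 10 23) (vtx 10 18) _ (by decide) (@Walk.cons _ _ (vtx 10 18) (vtx 10 19) _ (by decide) (@Walk.cons _ _ (vtx 10 19) (vtx 10 20) _ (by decide) (@Walk.cons _ _ (vtx 10 20) (vtx 10 1) _ (by decide) (@Walk.cons _ _ (vtx 10 1) (vtx 10 32) _ (by decide) (@Walk.cons _ _ (vtx 10 32) (vtx 10 33) _ (by decide) (@Walk.cons _ _ (vtx 10 33) (vtx 10 28) _ (by decide) (@Walk.cons _ _ (vtx 10 28) (vtx 10 29) _ (by decide) (@Walk.cons _ _ (vtx 10 29) (vtx 10 26) _ (by decide) (@Walk.cons _ _ (vtx 10 26) (vtx 10 2) _ (by decide) (@Walk.cons _ _ (vtx 10 2) (vtx 10 22) _ (by decide) (@Walk.cons _ _ (vtx 10 22) (vtx 10 21) _ (by decide) (@Walk.cons _ _ (vtx 10 21) (vtx 10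 17) _ (by decide) (@Walk.cons _ _ (vtx 10 17) (vtx 10 15) _ (by decide) (@Walk.cons _ _ (vtx 10 15) (vtx 10 14) _ (by decide) (@Walk.cons _ _ (vtx 10 14) (vtx 10 3) _ (by decide) (@Walk.cons _ _ (vtx 10 3) (vtx 10 30) _ (by decide) (@Walk.cons _ _ (vtx 10 30) (vtx 10 31) _ (by decide) (@Walk.cons _ _ (vtx 10 31) (vtx 10 27) _ (by decide) (@Walk.cons _ _ (vtx 10 27) (vtx 10 25) _ (by decide) (@Walk.cons _ _ (vtx 10 25) (vtx 10 24) _ (by decide) (@Walk.cons _ _ (vtx 10 24) (vtx 10 0) _ (by decide) Walk.nil))))))))))))))))))))))))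
lemma case10 : ∃ H, IsTwoFactor (P34.induce {w | w ≠ (10:Fin 34)}) H ∧
    ∃ (u : {w : Fin 34 // w ∈ {w : Fin 34 | w ≠ (10:Fin 34)}}) (p : H.Walk u u),
      p.IsCycle ∧ Even p.length := by
  refine ⟨pairG (fT tbl10) (gT tbl10) 10, good_twoFactor (by decide), vtx 10 0, wlk10, ?_, by decide⟩
  rw [Walk.isCycle_def, Walk.isTrail_def]
  exact ⟨by decide, fun h => absurd (congrArg Walk.length h) (by decide), by decide⟩

def tbl11 : List (Fin 34 × Fin 34) := [(4, 16), (6, 20), (12, 26), (10, 30), (5, 0), (4, 7), (13, 1), (5, 8), (7, 9), (8, 10), (9, 3), (0, 0), (13, 2), (6, 12), (15, 19), (14, 16), (15, 0), (18, 21), (17, 23), (14, 20), (19, 1), (17, 22), (21, 23), (18, 22), (25, 33), (24, 26), (25, 2), (28, 31), (27, 29), (28, 30), (29, 3), (27, 32), (31, 33), (24, 32)]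
def wlk11 : (pairG (fT tbl11) (gT tbl11) 11).Walk (vtx 11 0) (vtx 11 0) :=
  (@Walk.cons _ _ (vtx 11 0) (vtx 11 4) _ (by decide) (@Walk.cons _ _ (vtx 11 4) (vtx 11 5) _ (by decide) (@Walk.cons _ _ (vtx 11 5) (vtx 11 7) _ (by decide) (@Walk.cons _ _ (vtx 11 7) (vtx 11 8) _ (by decide) (@Walk.cons _ _ (vtx 11 8) (vtx 11 9) _ (by decide) (@Walk.cons _ _ (vtx 11 9) (vtx 11 10) _ (by decide) (@Walk.cons _ _ (vtx 11 10) (vtx 11 3) _ (by decide) (@Walk.cons _ _ (vtx 11 3) (vtx 11 30) _ (by decide) (@Walk.cons _ _ (vtx 11 30) (vtx 11 29) _ (by decide) (@Walk.cons _ _ (vtx 11 29) (vtx 11 28) _ (by decide) (@Walk.cons _ _ (vtx 11 28) (vtx 11 27) _ (by decide) (@Walk.cons _ _ (vtx 11 27) (vtx 11 31) _ (by decide) (@Walk.cons _ _ (vtx 11 31) (vtx 11 32) _ (by decide) (@Walk.cons _ _ (vtx 11 32) (vtx 11 33) _ (by decide) (@Walk.cons _ _ (vtx 11 33) (vtx 11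 24) _ (by decide) (@Walk.cons _ _ (vtx 11 24) (vtx 11 25) _ (by decide) (@Walk.cons _ _ (vtx 11 25) (vtx 11 26) _ (by decide) (@Walk.cons _ _ (vtx 11 26) (vtx 11 2) _ (by decide) (@Walk.cons _ _ (vtx 11 2) (vtx 11 12) _ (by decide) (@Walk.cons _ _ (vtx 11 12) (vtx 11 13) _ (by decide) (@Walk.cons _ _ (vtx 11 13) (vtx 11 6) _ (by decide) (@Walk.cons _ _ (vtx 11 6) (vtx 11 1) _ (by decide) (@Walk.cons _ _ (vtx 11 1) (vtx 11 20) _ (by decide) (@Walk.cons _ _ (vtx 11 20) (vtx 11 19) _ (by decide) (@Walk.cons _ _ (vtx 11 19) (vtx 11 14) _ (by decide) (@Walk.cons _ _ (vtx 11 14) (vtx 11 15) _ (by decide) (@Walk.cons _ _ (vtx 11 15) (vtx 11 16) _ (by decide) (@Walk.cons _ _ (vtx 11 16) (vtx 11 0) _ (by decide) Walk.nil))))))))))))))))))))))))))))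
lemma case11 : ∃ H, IsTwoFactor (P34.induce {w | w ≠ (11:Fin 34)}) H ∧
    ∃ (u : {w : Fin 34 // w ∈ {w : Fin 34 | w ≠ (11:Fin 34)}}) (p : H.Walk u u),
      p.IsCycle ∧ Even p.length := by
  refine ⟨pairG (fT tbl11) (gT tbl11) 11, good_twoFactor (by decide), vtx 11 0, wlk11, ?_, by decide⟩
  rw [Walk.isCycle_def, Walk.isTrail_def]
  exact ⟨by decide, fun h => absurd (congrArg Walk.length h) (by decide), by decide⟩

def tbl12 : List (Fin 34 × Fin 34) := [(16, 24), (20, 32), (22, 26), (14, 30), (5, 9), (4, 6), (5, 13), (8, 11), (7, 13), (4, 10), (9, 11), (7, 10), (0, 0), (6, 8), (15, 3), (14, 17), (23, 0), (15, 21), (19, 23), (18, 20), (19, 1), (17, 22), (21, 2), (16, 18), (25, 0), (24, 27), (29, 2), (25, 31), (29, 33), (26, 28), (31, 3), (27, 30), (33, 1), (28, 32)]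
def wlk12 : (pairG (fT tbl12) (gT tbl12) 12).Walk (vtx 12 0) (vtx 12 0) :=
  (@Walk.cons _ _ (vtx 12 0) (vtx 12 16) _ (by decide) (@Walk.cons _ _ (vtx 12 16) (vtx 12 23) _ (by decide) (@Walk.cons _ _ (vtx 12 23) (vtx 12 18) _ (by decide) (@Walk.cons _ _ (vtx 12 18) (vtx 12 19) _ (by decide) (@Walk.cons _ _ (vtx 12 19) (vtx 12 20) _ (by decide) (@Walk.cons _ _ (vtx 12 20) (vtx 12 1) _ (by decide) (@Walk.cons _ _ (vtx 12 1) (vtx 12 32) _ (by decide) (@Walk.cons _ _ (vtx 12 32) (vtx 12 33) _ (by decide) (@Walk.cons _ _ (vtx 12 33) (vtx 12 28) _ (by decide) (@Walk.cons _ _ (vtx 12 28) (vtx 12 29) _ (by decide) (@Walk.cons _ _ (vtx 12 29) (vtx 12 26) _ (by decide) (@Walk.cons _ _ (vtx 12 26) (vtx 12 2) _ (by decide) (@Walk.cons _ _ (vtx 12 2) (vtx 12 22) _ (by decide) (@Walk.cons _ _ (vtx 12 22) (vtx 12 21) _ (by decide) (@Walk.cons _ _ (vtx 12 21) (vtx 12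 17) _ (by decide) (@Walk.cons _ _ (vtx 12 17) (vtx 12 15) _ (by decide) (@Walk.cons _ _ (vtx 12 15) (vtx 12 14) _ (by decide) (@Walk.cons _ _ (vtx 12 14) (vtx 12 3) _ (by decide) (@Walk.cons _ _ (vtx 12 3) (vtx 12 30) _ (by decide) (@Walk.cons _ _ (vtx 12 30) (vtx 12 31) _ (by decide) (@Walk.cons _ _ (vtx 12 31) (vtx 12 27) _ (by decide) (@Walk.cons _ _ (vtx 12 27) (vtx 12 25) _ (by decide) (@Walk.cons _ _ (vtx 12 25) (vtx 12 24) _ (by decide) (@Walk.cons _ _ (vtx 12 24) (vtx 12 0) _ (by decide) Walk.nil))))))))))))))))))))))))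
lemma case12 : ∃ H, IsTwoFactor (P34.induce {w | w ≠ (12:Fin 34)}) H ∧
    ∃ (u : {w : Fin 34 // w ∈ {w : Fin 34 | w ≠ (12:Fin 34)}}) (p : H.Walk u u),
      p.IsCycle ∧ Even p.length := by
  refine ⟨pairG (fT tbl12) (gT tbl12) 12, good_twoFactor (by decide), vtx 12 0, wlk12, ?_, by decide⟩
  rw [Walk.isCycle_def, Walk.isTrail_def]
  exact ⟨by decide, fun h => absurd (congrArg Walk.length h) (by decide), by decide⟩

def tbl13 : List (Fin 34 × Fin 34) := [(4, 24), (6, 20), (12, 22), (10, 30), (5, 0), (4, 6), (5, 1), (8, 11), (7, 9), (8, 10), (9, 3), (7, 12), (11, 2), (0, 0), (15, 19), (14, 16), (15, 23), (18, 21), (17, 19), (14, 18), (21, 1), (17, 20), (23, 2), (16, 22), (25, 0), (24, 26), (25, 29), (28, 31), (27, 33), (26, 30), (29, 3), (27, 32), (31, 33), (28, 32)]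
def wlk13 : (pairG (fT tbl13) (gT tbl13) 13).Walk (vtx 13 0) (vtx 13 0) :=
  (@Walk.cons _ _ (vtx 13 0) (vtx 13 4) _ (by decide) (@Walk.cons _ _ (vtx 13 4) (vtx 13 5) _ (by decide) (@Walk.cons _ _ (vtx 13 5) (vtx 13 6) _ (by decide) (@Walk.cons _ _ (vtx 13 6) (vtx 13 1) _ (by decide) (@Walk.cons _ _ (vtx 13 1) (vtx 13 20) _ (by decide) (@Walk.cons _ _ (vtx 13 20) (vtx 13 21) _ (by decide) (@Walk.cons _ _ (vtx 13 21) (vtx 13 17) _ (by decide) (@Walk.cons _ _ (vtx 13 17) (vtx 13 18) _ (by decide) (@Walk.cons _ _ (vtx 13 18) (vtx 13 19) _ (by decide) (@Walk.cons _ _ (vtx 13 19) (vtx 13 14) _ (by decide) (@Walk.cons _ _ (vtx 13 14) (vtx 13 15) _ (by decide) (@Walk.cons _ _ (vtx 13 15) (vtx 13 16) _ (by decide) (@Walk.cons _ _ (vtx 13 16) (vtx 13 23) _ (by decide) (@Walk.cons _ _ (vtx 13 23) (vtx 13 22) _ (by decide) (@Walk.cons _ _ (vtx 13 22) (vtx 13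 2) _ (by decide) (@Walk.cons _ _ (vtx 13 2) (vtx 13 12) _ (by decide) (@Walk.cons _ _ (vtx 13 12) (vtx 13 11) _ (by decide) (@Walk.cons _ _ (vtx 13 11) (vtx 13 7) _ (by decide) (@Walk.cons _ _ (vtx 13 7) (vtx 13 8) _ (by decide) (@Walk.cons _ _ (vtx 13 8) (vtx 13 9) _ (by decide) (@Walk.cons _ _ (vtx 13 9) (vtx 13 10) _ (by decide) (@Walk.cons _ _ (vtx 13 10) (vtx 13 3) _ (by decide) (@Walk.cons _ _ (vtx 13 3) (vtx 13 30) _ (by decide) (@Walk.cons _ _ (vtx 13 30) (vtx 13 29) _ (by decide) (@Walk.cons _ _ (vtx 13 29) (vtx 13 26) _ (by decide) (@Walk.cons _ _ (vtx 13 26) (vtx 13 25) _ (by decide) (@Walk.cons _ _ (vtx 13 25) (vtx 13 24) _ (by decide) (@Walk.cons _ _ (vtx 13 24) (vtx 13 0) _ (by decide) Walk.nil))))))))))))))))))))))))))))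
lemma case13 : ∃ H, IsTwoFactor (P34.induce {w | w ≠ (13:Fin 34)}) H ∧
    ∃ (u : {w : Fin 34 // w ∈ {w : Fin 34 | w ≠ (13:Fin 34)}}) (p : H.Walk u u),
      p.IsCycle ∧ Even p.length := by
  refine ⟨pairG (fT tbl13) (gT tbl13) 13, good_twoFactor (by decide), vtx 13 0, wlk13, ?_, by decide⟩
  rw [Walk.isCycle_def, Walk.isTrail_def]
  exact ⟨by decide, fun h => absurd (congrArg Walk.length h) (by decide), by decide⟩

def tbl14 : List (Fin 34 × Fin 34) := [(16, 24), (6, 32), (22, 26), (10, 30), (5, 9), (4, 6), (5, 1), (8, 11), (7, 13), (4, 10), (9, 3), (7, 12), (11, 13), (8, 12), (0, 0), (16, 17), (15, 0), (15, 21), (19, 23), (18, 20), (19, 21), (17, 20), (23, 2), (18, 22), (25, 0), (24, 27), (29, 2), (25, 31), (29, 33), (26, 28), (31, 3), (27, 30), (33, 1), (28, 32)]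
def wlk14 : (pairG (fT tbl14) (gT tbl14) 14).Walk (vtx 14 0) (vtx 14 0) :=
  (@Walk.cons _ _ (vtx 14 0) (vtx 14 16) _ (by decide) (@Walk.cons _ _ (vtx 14 16) (vtx 14 15) _ (by decide) (@Walk.cons _ _ (vtx 14 15) (vtx 14 17) _ (by decide) (@Walk.cons _ _ (vtx 14 17) (vtx 14 21) _ (by decide) (@Walk.cons _ _ (vtx 14 21) (vtx 14 20) _ (by decide) (@Walk.cons _ _ (vtx 14 20) (vtx 14 19) _ (by decide) (@Walk.cons _ _ (vtx 14 19) (vtx 14 18) _ (by decide) (@Walk.cons _ _ (vtx 14 18) (vtx 14 23) _ (by decide) (@Walk.cons _ _ (vtx 14 23) (vtx 14 22) _ (by decide) (@Walk.cons _ _ (vtx 14 22) (vtx 14 2) _ (by decide) (@Walk.cons _ _ (vtx 14 2) (vtx 14 26) _ (by decide) (@Walk.cons _ _ (vtx 14 26) (vtx 14 29) _ (by decide) (@Walk.cons _ _ (vtx 14 29) (vtx 14 28) _ (by decide) (@Walk.cons _ _ (vtx 14 28) (vtx 14 33) _ (by decide) (@Walk.cons _ _ (vtx 14 33) (vtx 14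 32) _ (by decide) (@Walk.cons _ _ (vtx 14 32) (vtx 14 1) _ (by decide) (@Walk.cons _ _ (vtx 14 1) (vtx 14 6) _ (by decide) (@Walk.cons _ _ (vtx 14 6) (vtx 14 5) _ (by decide) (@Walk.cons _ _ (vtx 14 5) (vtx 14 4) _ (by decide) (@Walk.cons _ _ (vtx 14 4) (vtx 14 9) _ (by decide) (@Walk.cons _ _ (vtx 14 9) (vtx 14 10) _ (by decide) (@Walk.cons _ _ (vtx 14 10) (vtx 14 3) _ (by decide) (@Walk.cons _ _ (vtx 14 3) (vtx 14 30) _ (by decide) (@Walk.cons _ _ (vtx 14 30) (vtx 14 31) _ (by decide) (@Walk.cons _ _ (vtx 14 31) (vtx 14 27) _ (by decide) (@Walk.cons _ _ (vtx 14 27) (vtx 14 25) _ (by decide) (@Walk.cons _ _ (vtx 14 25) (vtx 14 24) _ (by decide) (@Walk.cons _ _ (vtx 14 24) (vtx 14 0) _ (by decide) Walk.nil))))))))))))))))))))))))))))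
lemma case14 : ∃ H, IsTwoFactor (P34.induce {w | w ≠ (14:Fin 34)}) H ∧
    ∃ (u : {w : Fin 34 // w ∈ {w : Fin 34 | w ≠ (14:Fin 34)}}) (p : H.Walk u u),
      p.IsCycle ∧ Even p.length := by
  refine ⟨pairG (fT tbl14) (gT tbl14) 14, good_twoFactor (by decide), vtx 14 0, wlk14, ?_, by decide⟩
  rw [Walk.isCycle_def, Walk.isTrail_def]
  exact ⟨by decide, fun h => absurd (congrArg Walk.length h) (by decide), by decide⟩

def tbl15 : List (Fin 34 × Fin 34) := [(16, 24), (6, 20), (12, 22), (14, 30), (5, 9), (4, 6), (5, 1), (8, 11), (7, 13), (4, 10), (9, 11), (7, 10), (13, 2), (8, 12), (19, 3), (0, 0), (23, 0), (18, 21), (17, 19), (14, 18), (21, 1), (17, 20), (23, 2), (16, 22), (25, 0), (24, 26), (25, 29), (28, 31), (27, 33), (26, 30), (29, 3), (27, 32), (31, 33), (28, 32)]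
def wlk15 : (pairG (fT tbl15) (gT tbl15) 15).Walk (vtx 15 0) (vtx 15 0) :=
  (@Walk.cons _ _ (vtx 15 0) (vtx 15 16) _ (by decide) (@Walk.cons _ _ (vtx 15 16) (vtx 15 23) _ (by decide) (@Walk.cons _ _ (vtx 15 23) (vtx 15 22) _ (by decide) (@Walk.cons _ _ (vtx 15 22) (vtx 15 2) _ (by decide) (@Walk.cons _ _ (vtx 15 2) (vtx 15 12) _ (by decide) (@Walk.cons _ _ (vtx 15 12) (vtx 15 13) _ (by decide) (@Walk.cons _ _ (vtx 15 13) (vtx 15 8) _ (by decide) (@Walk.cons _ _ (vtx 15 8) (vtx 15 7) _ (by decide) (@Walk.cons _ _ (vtx 15 7) (vtx 15 11) _ (by decide) (@Walk.cons _ _ (vtx 15 11) (vtx 15 10) _ (by decide) (@Walk.cons _ _ (vtx 15 10) (vtx 15 9) _ (by decide) (@Walk.cons _ _ (vtx 15 9) (vtx 15 4) _ (by decide) (@Walk.cons _ _ (vtx 15 4) (vtx 15 5) _ (by decide) (@Walk.cons _ _ (vtx 15 5) (vtx 15 6) _ (by decide) (@Walk.cons _ _ (vtx 15 6) (vtx 15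 1) _ (by decide) (@Walk.cons _ _ (vtx 15 1) (vtx 15 20) _ (by decide) (@Walk.cons _ _ (vtx 15 20) (vtx 15 21) _ (by decide) (@Walk.cons _ _ (vtx 15 21) (vtx 15 17) _ (by decide) (@Walk.cons _ _ (vtx 15 17) (vtx 15 18) _ (by decide) (@Walk.cons _ _ (vtx 15 18) (vtx 15 19) _ (by decide) (@Walk.cons _ _ (vtx 15 19) (vtx 15 14) _ (by decide) (@Walk.cons _ _ (vtx 15 14) (vtx 15 3) _ (by decide) (@Walk.cons _ _ (vtx 15 3) (vtx 15 30) _ (by decide) (@Walk.cons _ _ (vtx 15 30) (vtx 15 29) _ (by decide) (@Walk.cons _ _ (vtx 15 29) (vtx 15 26) _ (by decide) (@Walk.cons _ _ (vtx 15 26) (vtx 15 25) _ (by decide) (@Walk.cons _ _ (vtx 15 25) (vtx 15 24) _ (by decide) (@Walk.cons _ _ (vtx 15 24) (vtx 15 0) _ (by decide) Walk.nil))))))))))))))))))))))))))))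
lemma case15 : ∃ H, IsTwoFactor (P34.induce {w | w ≠ (15:Fin 34)}) H ∧
    ∃ (u : {w : Fin 34 // w ∈ {w : Fin 34 | w ≠ (15:Fin 34)}}) (p : H.Walk u u),
      p.IsCycle ∧ Even p.length := by
  refine ⟨pairG (fT tbl15) (gT tbl15) 15, good_twoFactor (by decide), vtx 15 0, wlk15, ?_, by decide⟩
  rw [Walk.isCycle_def, Walk.isTrail_def]
  exact ⟨by decide, fun h => absurd (congrArg Walk.length h) (by decide), by decide⟩

def tbl16 : List (Fin 34 × Fin 34) := [(4, 24), (20, 32), (12, 26), (14, 30), (5, 0), (4, 6), (5, 13), (8, 11), (7, 9), (8, 10), (9, 11), (7, 10), (13, 2), (6, 12), (15, 3), (14, 17), (0, 0), (15, 21), (19, 23), (18, 20), (19, 1), (17, 22), (21, 23), (18, 22), (25, 0), (24, 27), (29, 2), (25, 31), (29, 33), (26, 28), (31, 3), (27, 30), (33, 1), (28, 32)]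
def wlk16 : (pairG (fT tbl16) (gT tbl16) 16).Walk (vtx 16 0) (vtx 16 0) :=
  (@Walk.cons _ _ (vtx 16 0) (vtx 16 4) _ (by decide) (@Walk.cons _ _ (vtx 16 4) (vtx 16 5) _ (by decide) (@Walk.cons _ _ (vtx 16 5) (vtx 16 6) _ (by decide) (@Walk.cons _ _ (vtx 16 6) (vtx 16 13) _ (by decide) (@Walk.cons _ _ (vtx 16 13) (vtx 16 12) _ (by decide) (@Walk.cons _ _ (vtx 16 12) (vtx 16 2) _ (by decide) (@Walk.cons _ _ (vtx 16 2) (vtx 16 26) _ (by decide) (@Walk.cons _ _ (vtx 16 26) (vtx 16 29) _ (by decide) (@Walk.cons _ _ (vtx 16 29) (vtx 16 28) _ (by decide) (@Walk.cons _ _ (vtx 16 28) (vtx 16 33) _ (by decide) (@Walk.cons _ _ (vtx 16 33) (vtx 16 32) _ (by decide) (@Walk.cons _ _ (vtx 16 32) (vtx 16 1) _ (by decide) (@Walk.cons _ _ (vtx 16 1) (vtx 16 20) _ (by decide) (@Walk.cons _ _ (vtx 16 20) (vtx 16 19) _ (by decide) (@Walk.cons _ _ (vtx 16 19) (vtx 16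 18) _ (by decide) (@Walk.cons _ _ (vtx 16 18) (vtx 16 23) _ (by decide) (@Walk.cons _ _ (vtx 16 23) (vtx 16 22) _ (by decide) (@Walk.cons _ _ (vtx 16 22) (vtx 16 21) _ (by decide) (@Walk.cons _ _ (vtx 16 21) (vtx 16 17) _ (by decide) (@Walk.cons _ _ (vtx 16 17) (vtx 16 15) _ (by decide) (@Walk.cons _ _ (vtx 16 15) (vtx 16 14) _ (by decide) (@Walk.cons _ _ (vtx 16 14) (vtx 16 3) _ (by decide) (@Walk.cons _ _ (vtx 16 3) (vtx 16 30) _ (by decide) (@Walk.cons _ _ (vtx 16 30) (vtx 16 31) _ (by decide) (@Walk.cons _ _ (vtx 16 31) (vtx 16 27) _ (by decide) (@Walk.cons _ _ (vtx 16 27) (vtx 16 25) _ (by decide) (@Walk.cons _ _ (vtx 16 25) (vtx 16 24) _ (by decide) (@Walk.cons _ _ (vtx 16 24) (vtx 16 0) _ (by decide) Walk.nil))))))))))))))))))))))))))))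
lemma case16 : ∃ H, IsTwoFactor (P34.induce {w | w ≠ (16:Fin 34)}) H ∧
    ∃ (u : {w : Fin 34 // w ∈ {w : Fin 34 | w ≠ (16:Fin 34)}}) (p : H.Walk u u),
      p.IsCycle ∧ Even p.length := by
  refine ⟨pairG (fT tbl16) (gT tbl16) 16, good_twoFactor (by decide), vtx 16 0, wlk16, ?_, by decide⟩
  rw [Walk.isCycle_def, Walk.isTrail_def]
  exact ⟨by decide, fun h => absurd (congrArg Walk.length h) (by decide), by decide⟩

def tbl17 : List (Fin 34 × Fin 34) := [(16, 24), (6, 32), (12, 26), (14, 30), (5, 9), (4, 6), (5, 1), (8, 11), (7, 13), (4, 10), (9, 11), (7, 10), (13, 2), (8, 12), (15, 3), (14, 16), (15, 0), (0, 0), (19, 23), (18, 20), (19, 21), (20, 22), (21, 23), (18, 22), (25, 0), (24, 27), (29, 2), (25, 31), (29, 33), (26, 28), (31, 3), (27, 30), (33, 1), (28, 32)]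
def wlk17 : (pairG (fT tbl17) (gT tbl17) 17).Walk (vtx 17 0) (vtx 17 0) :=
  (@Walk.cons _ _ (vtx 17 0) (vtx 17 16) _ (by decide) (@Walk.cons _ _ (vtx 17 16) (vtx 17 15) _ (by decide) (@Walk.cons _ _ (vtx 17 15) (vtx 17 14) _ (by decide) (@Walk.cons _ _ (vtx 17 14) (vtx 17 3) _ (by decide) (@Walk.cons _ _ (vtx 17 3) (vtx 17 30) _ (by decide) (@Walk.cons _ _ (vtx 17 30) (vtx 17 31) _ (by decide) (@Walk.cons _ _ (vtx 17 31) (vtx 17 27) _ (by decide) (@Walk.cons _ _ (vtx 17 27) (vtx 17 25) _ (by decide) (@Walk.cons _ _ (vtx 17 25) (vtx 17 24) _ (by decide) (@Walk.cons _ _ (vtx 17 24) (vtx 17 0) _ (by decide) Walk.nil))))))))))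
lemma case17 : ∃ H, IsTwoFactor (P34.induce {w | w ≠ (17:Fin 34)}) H ∧
    ∃ (u : {w : Fin 34 // w ∈ {w : Fin 34 | w ≠ (17:Fin 34)}}) (p : H.Walk u u),
      p.IsCycle ∧ Even p.length := by
  refine ⟨pairG (fT tbl17) (gT tbl17) 17, good_twoFactor (by decide), vtx 17 0, wlk17, ?_, by decide⟩
  rw [Walk.isCycle_def, Walk.isTrail_def]
  exact ⟨by decide, fun h => absurd (congrArg Walk.length h) (by decide), by decide⟩

def tbl18 : List (Fin 34 × Fin 34) := [(16, 24), (6, 32), (22, 26), (10, 30), (5, 9), (4, 6), (5, 1), (8, 11), (7, 13), (4, 10), (9, 3), (7, 12), (11, 13), (8, 12), (15, 19), (14, 17), (23, 0), (15, 21), (0, 0), (14, 20), (19, 21), (17, 20), (23, 2), (16, 22), (25, 0), (24, 27), (29, 2), (25, 31), (29, 33), (26, 28), (31, 3), (27, 30), (33, 1), (28, 32)]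
def wlk18 : (pairG (fT tbl18) (gT tbl18) 18).Walk (vtx 18 0) (vtx 18 0) :=
  (@Walk.cons _ _ (vtx 18 0) (vtx 18 16) _ (by decide) (@Walk.cons _ _ (vtx 18 16) (vtx 18 23) _ (by decide) (@Walk.cons _ _ (vtx 18 23) (vtx 18 22) _ (by decide) (@Walk.cons _ _ (vtx 18 22) (vtx 18 2) _ (by decide) (@Walk.cons _ _ (vtx 18 2) (vtx 18 26) _ (by decide) (@Walk.cons _ _ (vtx 18 26) (vtx 18 29) _ (by decide) (@Walk.cons _ _ (vtx 18 29) (vtx 18 28) _ (by decide) (@Walk.cons _ _ (vtx 18 28) (vtx 18 33) _ (by decide) (@Walk.cons _ _ (vtx 18 33) (vtx 18 32) _ (by decide) (@Walk.cons _ _ (vtx 18 32) (vtx 18 1) _ (by decide) (@Walk.cons _ _ (vtx 18 1) (vtx 18 6) _ (by decide) (@Walk.cons _ _ (vtx 18 6) (vtx 18 5) _ (by decide) (@Walk.cons _ _ (vtx 18 5) (vtx 18 4) _ (by decide) (@Walk.cons _ _ (vtx 18 4) (vtx 18 9) _ (by decide) (@Walk.cons _ _ (vtx 18 9) (vtx 18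 10) _ (by decide) (@Walk.cons _ _ (vtx 18 10) (vtx 18 3) _ (by decide) (@Walk.cons _ _ (vtx 18 3) (vtx 18 30) _ (by decide) (@Walk.cons _ _ (vtx 18 30) (vtx 18 31) _ (by decide) (@Walk.cons _ _ (vtx 18 31) (vtx 18 27) _ (by decide) (@Walk.cons _ _ (vtx 18 27) (vtx 18 25) _ (by decide) (@Walk.cons _ _ (vtx 18 25) (vtx 18 24) _ (by decide) (@Walk.cons _ _ (vtx 18 24) (vtx 18 0) _ (by decide) Walk.nil))))))))))))))))))))))
lemma case18 : ∃ H, IsTwoFactor (P34.induce {w | w ≠ (18:Fin 34)}) H ∧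
    ∃ (u : {w : Fin 34 // w ∈ {w : Fin 34 | w ≠ (18:Fin 34)}}) (p : H.Walk u u),
      p.IsCycle ∧ Even p.length := by
  refine ⟨pairG (fT tbl18) (gT tbl18) 18, good_twoFactor (by decide), vtx 18 0, wlk18, ?_, by decide⟩
  rw [Walk.isCycle_def, Walk.isTrail_def]
  exact ⟨by decide, fun h => absurd (congrArg Walk.length h) (by decide), by decide⟩

def tbl19 : List (Fin 34 × Fin 34) := [(16, 24), (6, 20), (12, 22), (14, 30), (5, 9), (4, 6), (5, 1), (8, 11), (7, 13), (4, 10), (9, 11), (7, 10), (13, 2), (8, 12), (15, 3), (14, 16), (15, 0), (18, 21), (17, 23), (0, 0), (21, 1), (17, 20), (23, 2), (18, 22), (25, 0), (24, 26), (25, 29), (28, 31), (27, 33), (26, 30), (29, 3), (27, 32), (31, 33), (28, 32)]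
def wlk19 : (pairG (fT tbl19) (gT tbl19) 19).Walk (vtx 19 0) (vtx 19 0) :=
  (@Walk.cons _ _ (vtx 19 0) (vtx 19 16) _ (by decide) (@Walk.cons _ _ (vtx 19 16) (vtx 19 15) _ (by decide) (@Walk.cons _ _ (vtx 19 15) (vtx 19 14) _ (by decide) (@Walk.cons _ _ (vtx 19 14) (vtx 19 3) _ (by decide) (@Walk.cons _ _ (vtx 19 3) (vtx 19 30) _ (by decide) (@Walk.cons _ _ (vtx 19 30) (vtx 19 29) _ (by decide) (@Walk.cons _ _ (vtx 19 29) (vtx 19 26) _ (by decide) (@Walk.cons _ _ (vtx 19 26) (vtx 19 25) _ (by decide) (@Walk.cons _ _ (vtx 19 25) (vtx 19 24) _ (by decide) (@Walk.cons _ _ (vtx 19 24) (vtx 19 0) _ (by decide) Walk.nil))))))))))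
lemma case19 : ∃ H, IsTwoFactor (P34.induce {w | w ≠ (19:Fin 34)}) H ∧
    ∃ (u : {w : Fin 34 // w ∈ {w : Fin 34 | w ≠ (19:Fin 34)}}) (p : H.Walk u u),
      p.IsCycle ∧ Even p.length := by
  refine ⟨pairG (fT tbl19) (gT tbl19) 19, good_twoFactor (by decide), vtx 19 0, wlk19, ?_, by decide⟩
  rw [Walk.isCycle_def, Walk.isTrail_def]
  exact ⟨by decide, fun h => absurd (congrArg Walk.length h) (by decide), by decide⟩

def tbl20 : List (Fin 34 × Fin 34) := [(16, 24), (6, 32), (12, 26), (14, 30), (5, 9), (4, 6), (5, 1), (8, 11), (7, 13), (4, 10), (9, 11), (7, 10), (13, 2), (8, 12), (19, 3), (16, 17), (15, 0), (15, 21), (19, 23), (14, 18), (0, 0), (17, 22), (21, 23), (18, 22), (25, 0), (24, 27), (29, 2), (25, 31), (29, 33), (26, 28), (31, 3), (27, 30), (33, 1), (28, 32)]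
def wlk20 : (pairG (fT tbl20) (gT tbl20) 20).Walk (vtx 20 0) (vtx 20 0) :=
  (@Walk.cons _ _ (vtx 20 0) (vtx 20 16) _ (by decide) (@Walk.cons _ _ (vtx 20 16) (vtx 20 15) _ (by decide) (@Walk.cons _ _ (vtx 20 15) (vtx 20 17) _ (by decide) (@Walk.cons _ _ (vtx 20 17) (vtx 20 21) _ (by decide) (@Walk.cons _ _ (vtx 20 21) (vtx 20 22) _ (by decide) (@Walk.cons _ _ (vtx 20 22) (vtx 20 23) _ (by decide) (@Walk.cons _ _ (vtx 20 23) (vtx 20 18) _ (by decide) (@Walk.cons _ _ (vtx 20 18) (vtx 20 19) _ (by decide) (@Walk.cons _ _ (vtx 20 19) (vtx 20 14) _ (by decide) (@Walk.cons _ _ (vtx 20 14) (vtx 20 3) _ (by decide) (@Walk.cons _ _ (vtx 20 3) (vtx 20 30) _ (by decide) (@Walk.cons _ _ (vtx 20 30) (vtx 20 31) _ (by decide) (@Walk.cons _ _ (vtx 20 31) (vtx 20 27) _ (by decide) (@Walk.cons _ _ (vtx 20 27) (vtx 20 25) _ (by decide) (@Walk.cons _ _ (vtx 20 25) (vtx 20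 24) _ (by decide) (@Walk.cons _ _ (vtx 20 24) (vtx 20 0) _ (by decide) Walk.nil))))))))))))))))
lemma case20 : ∃ H, IsTwoFactor (P34.induce {w | w ≠ (20:Fin 34)}) H ∧
    ∃ (u : {w : Fin 34 // w ∈ {w : Fin 34 | w ≠ (20:Fin 34)}}) (p : H.Walk u u),
      p.IsCycle ∧ Even p.length := by
  refine ⟨pairG (fT tbl20) (gT tbl20) 20, good_twoFactor (by decide), vtx 20 0, wlk20, ?_, by decide⟩
  rw [Walk.isCycle_def, Walk.isTrail_def]
  exact ⟨by decide, fun h => absurd (congrArg Walk.length h) (by decide), by decide⟩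

def tbl21 : List (Fin 34 × Fin 34) := [(16, 24), (6, 20), (12, 22), (14, 30), (5, 9), (4, 6), (5, 1), (8, 11), (7, 13), (4, 10), (9, 11), (7, 10), (13, 2), (8, 12), (15, 3), (14, 17), (23, 0), (15, 18), (17, 19), (18, 20), (19, 1), (0, 0), (23, 2), (16, 22), (25, 0), (24, 26), (25, 29), (28, 31), (27, 33), (26, 30), (29, 3), (27, 32), (31, 33), (28, 32)]
def wlk21 : (pairG (fT tbl21) (gT tbl21) 21).Walk (vtx 21 0) (vtx 21 0) :=
  (@Walk.cons _ _ (vtx 21 0) (vtx 21 16) _ (by decide) (@Walk.cons _ _ (vtx 21 16) (vtx 21 23) _ (by decide) (@Walk.cons _ _ (vtx 21 23) (vtx 21 22) _ (by decide) (@Walk.cons _ _ (vtx 21 22) (vtx 21 2) _ (by decide) (@Walk.cons _ _ (vtx 21 2) (vtx 21 12) _ (by decide) (@Walk.cons _ _ (vtx 21 12) (vtx 21 13) _ (by decide) (@Walk.cons _ _ (vtx 21 13) (vtx 21 8) _ (by decide) (@Walk.cons _ _ (vtx 21 8) (vtx 21 7) _ (by decide) (@Walk.cons _ _ (vtx 21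 7) (vtx 21 11) _ (by decide) (@Walk.cons _ _ (vtx 21 11) (vtx 21 10) _ (by decide) (@Walk.cons _ _ (vtx 21 10) (vtx 21 9) _ (by decide) (@Walk.cons _ _ (vtx 21 9) (vtx 21 4) _ (by decide) (@Walk.cons _ _ (vtx 21 4) (vtx 21 5) _ (by decide) (@Walk.cons _ _ (vtx 21 5) (vtx 21 6) _ (by decide) (@Walk.cons _ _ (vtx 21 6) (vtx 21 1) _ (by decide) (@Walk.cons _ _ (vtx 21 1) (vtx 21 20) _ (by decide) (@Walk.cons _ _ (vtx 21 20) (vtx 21 19) _ (by decide) (@Walk.cons _ _ (vtx 21 19) (vtx 21 18) _ (by decide) (@Walk.cons _ _ (vtx 21 18) (vtx 21 17) _ (by decide) (@Walk.cons _ _ (vtx 21 17) (vtx 21 15) _ (by decide) (@Walk.cons _ _ (vtx 21 15) (vtx 21 14) _ (by decide) (@Walk.cons _ _ (vtx 21 14) (vtx 21 3) _ (by decide) (@Walk.cons _ _ (vtx 21 3) (vtx 21 30) _ (by decide) (@Walk.cons _ _ (vtx 21 30) (vtx 21 29) _ (by decide) (@Walk.cons _ _ (vtx 21 29) (vtx 21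 26) _ (by decide) (@Walk.cons _ _ (vtx 21 26) (vtx 21 25) _ (by decide) (@Walk.cons _ _ (vtx 21 25) (vtx 21 24) _ (by decide) (@Walk.cons _ _ (vtx 21 24) (vtx 21 0) _ (by decide) Walk.nil))))))))))))))))))))))))))))
lemma case21 : ∃ H, IsTwoFactor (P34.induce {w | w ≠ (21:Fin 34)}) H ∧
    ∃ (u : {w : Fin 34 // w ∈ {w : Fin 34 | w ≠ (21:Fin 34)}}) (p : H.Walk u u),
      p.IsCycle ∧ Even p.length := by
  refine ⟨pairG (fT tbl21) (gT tbl21) 21, good_twoFactor (by decide), vtx 21 0, wlk21, ?_, by decide⟩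
  rw [Walk.isCycle_def, Walk.isTrail_def]
  exact ⟨by decide, fun h => absurd (congrArg Walk.length h) (by decide), by decide⟩

def tbl22 : List (Fin 34 × Fin 34) := [(16, 24), (6, 32), (12, 26), (14, 30), (5, 9), (4, 6), (5, 1), (8, 11), (7, 13), (4, 10), (9, 11), (7, 10), (13, 2), (8, 12), (15, 3), (14, 17), (23, 0), (15, 21), (19, 23), (18, 20), (19, 21), (17, 20), (0, 0), (16, 18), (25, 0), (24, 27), (29, 2), (25, 31), (29, 33), (26, 28), (31, 3), (27, 30), (33, 1), (28, 32)]
def wlk22 : (pairG (fT tbl22) (gT tbl22) 22).Walk (vtx 22 0) (vtx 22 0) :=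
  (@Walk.cons _ _ (vtx 22 0) (vtx 22 16) _ (by decide) (@Walk.cons _ _ (vtx 22 16) (vtx 22 23) _ (by decide) (@Walk.cons _ _ (vtx 22 23) (vtx 22 18) _ (by decide) (@Walk.cons _ _ (vtx 22 18) (vtx 22 19) _ (by decide) (@Walk.cons _ _ (vtx 22 19) (vtx 22 20) _ (by decide) (@Walk.cons _ _ (vtx 22 20) (vtx 22 21) _ (by decide) (@Walk.cons _ _ (vtx 22 21) (vtx 22 17) _ (by decide) (@Walk.cons _ _ (vtx 22 17) (vtx 22 15) _ (by decide) (@Walk.cons _ _ (vtx 22 15) (vtx 22 14) _ (by decide) (@Walk.cons _ _ (vtx 22 14) (vtx 22 3) _ (by decide) (@Walk.cons _ _ (vtx 22 3) (vtx 22 30) _ (by decide) (@Walk.cons _ _ (vtx 22 30) (vtx 22 31) _ (by decide) (@Walk.cons _ _ (vtx 22 31) (vtx 22 27) _ (by decide) (@Walk.cons _ _ (vtx 22 27) (vtx 22 25) _ (by decide) (@Walk.cons _ _ (vtx 22 25) (vtx 22 24) _ (by decide) (@Walk.cons _ _ (vtx 22 24) (vtx 22 0) _ (by decide) Walk.ni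l))))))))))))))))
lemma case22 : ∃ H, IsTwoFactor (P34.induce {w | w ≠ (22:Fin 34)}) H ∧
    ∃ (u : {w : Fin 34 // w ∈ {w : Fin 34 | w ≠ (22:Fin 34)}}) (p : H.Walk u u),
      p.IsCycle ∧ Even p.length := by
  refine ⟨pairG (fT tbl22) (gT tbl22) 22, good_twoFactor (by decide), vtx 22 0, wlk22, ?_, by decide⟩
  rw [Walk.isCycle_def, Walk.isTrail_def]
  exact ⟨by decide, fun h => absurd (congrArg Walk.length h) (by decide), by decide⟩

def tbl23 : List (Fin 34 × Fin 34) := [(16, 24), (6, 20), (12, 22), (14, 30), (5, 9), (4, 6), (5, 1), (8, 11), (7, 13), (4, 10), (9, 11), (7, 10), (13, 2), (8, 12), (15, 3), (14, 16), (15, 0), (18, 21), (17, 19), (18, 20), (19, 1), (17, 22), (21, 2), (0, 0), (25, 0), (24, 26), (25, 29), (28, 31), (27, 33), (26, 30), (29, 3), (27, 32), (31, 33), (28, 32)]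
def wlk23 : (pairG (fT tbl23) (gT tbl23) 23).Walk (vtx 23 0) (vtx 23 0) :=
  (@Walk.cons _ _ (vtx 23 0) (vtx 23 16) _ (by decide) (@Walk.cons _ _ (vtx 23 16) (vtx 23 15) _ (by decide) (@Walk.cons _ _ (vtx 23 15) (vtx 23 14) _ (by decide) (@Walk.cons _ _ (vtx 23 14) (vtx 23 3) _ (by decide) (@Walk.cons _ _ (vtx 23 3) (vtx 23 30) _ (by decide) (@Walk.cons _ _ (vtx 23 30) (vtx 23 29) _ (by decide) (@Walk.cons _ _ (vtx 23 29) (vtx 23 26) _ (by decide) (@Walk.cons _ _ (vtx 23 26) (vtx 23 25) _ (by decide) (@Walk.cons _ _ (vtx 23 25) (vtx 23 24) _ (by decide) (@Walk.cons _ _ (vtx 23 24) (vtx 23 0) _ (by decide) Walk.nil))))))))))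
lemma case23 : ∃ H, IsTwoFactor (P34.induce {w | w ≠ (23:Fin 34)}) H ∧
    ∃ (u : {w : Fin 34 // w ∈ {w : Fin 34 | w ≠ (23:Fin 34)}}) (p : H.Walk u u),
      p.IsCycle ∧ Even p.length := by
  refine ⟨pairG (fT tbl23) (gT tbl23) 23, good_twoFactor (by decide), vtx 23 0, wlk23, ?_, by decide⟩
  rw [Walk.isCycle_def, Walk.isTrail_def]
  exact ⟨by decide, fun h => absurd (congrArg Walk.length h) (by decide), by decide⟩

def tbl24 : List (Fin 34 × Fin 34) := [(4, 16), (20, 32), (12, 22), (14, 30), (5, 0), (4, 6), (5, 13), (8, 11), (7, 9), (8, 10), (9, 11), (7, 10), (13, 2), (6, 12), (15, 3), (14, 17), (23, 0), (15, 21), (19, 23), (18, 20), (19, 1), (17, 22), (21, 2), (16, 18), (0, 0), (26, 27), (25, 29), (25, 31), (29, 33), (26, 28), (31, 3), (27, 30), (33, 1), (28, 32)]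
def wlk24 : (pairG (fT tbl24) (gT tbl24) 24).Walk (vtx 24 0) (vtx 24 0) :=
  (@Walk.cons _ _ (vtx 24 0) (vtx 24 4) _ (by decide) (@Walk.cons _ _ (vtx 24 4) (vtx 24 5) _ (by decide) (@Walk.cons _ _ (vtx 24 5) (vtx 24 6) _ (by decide) (@Walk.cons _ _ (vtx 24 6) (vtx 24 13) _ (by decide) (@Walk.cons _ _ (vtx 24 13) (vtx 24 12) _ (by decide) (@Walk.cons _ _ (vtx 24 12) (vtx 24 2) _ (by decide) (@Walk.cons _ _ (vtx 24 2) (vtx 24 22) _ (by decide) (@Walk.cons _ _ (vtx 24 22) (vtx 24 21) _ (by decide) (@Walk.cons _ _ (vtx 24 21) (vtx 24 17) _ (by decide) (@Walk.cons _ _ (vtx 24 17) (vtx 24 15) _ (by decide) (@Walk.cons _ _ (vtx 24 15) (vtx 24 14) _ (by decide) (@Walk.cons _ _ (vtx 24 14) (vtx 24 3) _ (by decide) (@Walk.cons _ _ (vtx 24 3) (vtx 24 30) _ (by decide) (@Walk.cons _ _ (vtx 24 30) (vtx 24 31) _ (by decide) (@Walk.cons _ _ (vtx 24 31) (vtx 24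 27) _ (by decide) (@Walk.cons _ _ (vtx 24 27) (vtx 24 25) _ (by decide) (@Walk.cons _ _ (vtx 24 25) (vtx 24 26) _ (by decide) (@Walk.cons _ _ (vtx 24 26) (vtx 24 29) _ (by decide) (@Walk.cons _ _ (vtx 24 29) (vtx 24 28) _ (by decide) (@Walk.cons _ _ (vtx 24 28) (vtx 24 33) _ (by decide) (@Walk.cons _ _ (vtx 24 33) (vtx 24 32) _ (by decide) (@Walk.cons _ _ (vtx 24 32) (vtx 24 1) _ (by decide) (@Walk.cons _ _ (vtx 24 1) (vtx 24 20) _ (by decide) (@Walk.cons _ _ (vtx 24 20) (vtx 24 19) _ (by decide) (@Walk.cons _ _ (vtx 24 19) (vtx 24 18) _ (by decide) (@Walk.cons _ _ (vtx 24 18) (vtx 24 23) _ (by decide) (@Walk.cons _ _ (vtx 24 23) (vtx 24 16) _ (by decide) (@Walk.cons _ _ (vtx 24 16) (vtx 24 0) _ (by decide) Walk.nil))))))))))))))))))))))))))))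
lemma case24 : ∃ H, IsTwoFactor (P34.induce {w | w ≠ (24:Fin 34)}) H ∧
    ∃ (u : {w : Fin 34 // w ∈ {w : Fin 34 | w ≠ (24:Fin 34)}}) (p : H.Walk u u),
      p.IsCycle ∧ Even p.length := by
  refine ⟨pairG (fT tbl24) (gT tbl24) 24, good_twoFactor (by decide), vtx 24 0, wlk24, ?_, by decide⟩
  rw [Walk.isCycle_def, Walk.isTrail_def]
  exact ⟨by decide, fun h => absurd (congrArg Walk.length h) (by decide), by decide⟩

def tbl25 : List (Fin 34 × Fin 34) := [(16, 24), (20, 32), (12, 26), (10, 30), (5, 9), (4, 6), (5, 13), (8, 11), (7, 9), (4, 8), (11, 3), (7, 10), (13, 2), (6, 12), (15, 19), (14, 16), (15, 0), (18, 21), (17, 23), (14, 20), (19, 1), (17, 22), (21, 23), (18, 22), (33, 0), (0, 0), (29, 2), (28, 31), (27, 29), (26, 28), (31, 3), (27, 30), (33, 1), (24, 32)]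
def wlk25 : (pairG (fT tbl25) (gT tbl25) 25).Walk (vtx 25 0) (vtx 25 0) :=
  (@Walk.cons _ _ (vtx 25 0) (vtx 25 16) _ (by decide) (@Walk.cons _ _ (vtx 25 16) (vtx 25 15) _ (by decide) (@Walk.cons _ _ (vtx 25 15) (vtx 25 14) _ (by decide) (@Walk.cons _ _ (vtx 25 14) (vtx 25 19) _ (by decide) (@Walk.cons _ _ (vtx 25 19) (vtx 25 20) _ (by decide) (@Walk.cons _ _ (vtx 25 20) (vtx 25 1) _ (by decide) (@Walk.cons _ _ (vtx 25 1) (vtx 25 32) _ (by decide) (@Walk.cons _ _ (vtx 25 32) (vtx 25 33) _ (by decide) (@Walk.cons _ _ (vtx 25 33) (vtx 25 24) _ (by decide) (@Walk.cons _ _ (vtx 25 24) (vtx 25 0) _ (by decide) Walk.nil))))))))))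
lemma case25 : ∃ H, IsTwoFactor (P34.induce {w | w ≠ (25:Fin 34)}) H ∧
    ∃ (u : {w : Fin 34 // w ∈ {w : Fin 34 | w ≠ (25:Fin 34)}}) (p : H.Walk u u),
      p.IsCycle ∧ Even p.length := by
  refine ⟨pairG (fT tbl25) (gT tbl25) 25, good_twoFactor (by decide), vtx 25 0, wlk25, ?_, by decide⟩
  rw [Walk.isCycle_def, Walk.isTrail_def]
  exact ⟨by decide, fun h => absurd (congrArg Walk.length h) (by decide), by decide⟩

def tbl26 : List (Fin 34 × Fin 34) := [(16, 24), (20, 32), (12, 22), (10, 14), (5, 9), (4, 6), (5, 13), (8, 11), (7, 9), (4, 8), (11, 3), (7, 10), (13, 2), (6, 12), (15, 3), (14, 17), (23, 0), (15, 21), (19, 23), (18, 20), (19, 1), (17, 22), (21, 2), (16, 18), (25, 0), (24, 27), (0, 0), (25, 31), (29, 33), (28, 30), (29, 31), (27, 30), (33, 1), (28, 32)]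
def wlk26 : (pairG (fT tbl26) (gT tbl26) 26).Walk (vtx 26 0) (vtx 26 0) :=
  (@Walk.cons _ _ (vtx 26 0) (vtx 26 16) _ (by decide) (@Walk.cons _ _ (vtx 26 16) (vtx 26 23) _ (by decide) (@Walk.cons _ _ (vtx 26 23) (vtx 26 18) _ (by decide) (@Walk.cons _ _ (vtx 26 18) (vtx 26 19) _ (by decide) (@Walk.cons _ _ (vtx 26 19) (vtx 26 20) _ (by decide) (@Walk.cons _ _ (vtx 26 20) (vtx 26 1) _ (by decide) (@Walk.cons _ _ (vtx 26 1) (vtx 26 32) _ (by decide) (@Walk.cons _ _ (vtx 26 32) (vtx 26 33) _ (by decide) (@Walk.cons _ _ (vtx 26 33) (vtx 26 28) _ (by decide) (@Walk.cons _ _ (vtx 26 28) (vtx 26 29) _ (by decide) (@Walk.cons _ _ (vtx 26 29) (vtx 26 30) _ (by decide) (@Walk.cons _ _ (vtx 26 30) (vtx 26 31) _ (by decide) (@Walk.cons _ _ (vtx 26 31) (vtx 26 27) _ (by decide) (@Walk.cons _ _ (vtx 26 27) (vtx 26 25) _ (by decide) (@Walk.cons _ _ (vtx 26 25) (vtx 26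 24) _ (by decide) (@Walk.cons _ _ (vtx 26 24) (vtx 26 0) _ (by decide) Walk.nil))))))))))))))))
lemma case26 : ∃ H, IsTwoFactor (P34.induce {w | w ≠ (26:Fin 34)}) H ∧
    ∃ (u : {w : Fin 34 // w ∈ {w : Fin 34 | w ≠ (26:Fin 34)}}) (p : H.Walk u u),
      p.IsCycle ∧ Even p.length := by
  refine ⟨pairG (fT tbl26) (gT tbl26) 26, good_twoFactor (by decide), vtx 26 0, wlk26, ?_, by decide⟩
  rw [Walk.isCycle_def, Walk.isTrail_def]
  exact ⟨by decide, fun h => absurd (congrArg Walk.length h) (by decide), by decide⟩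

def tbl27 : List (Fin 34 × Fin 34) := [(16, 24), (6, 20), (22, 26), (10, 14), (5, 9), (4, 6), (5, 1), (8, 11), (7, 13), (4, 10), (9, 3), (7, 12), (11, 13), (8, 12), (15, 3), (14, 17), (23, 0), (15, 21), (19, 23), (18, 20), (19, 1), (17, 22), (21, 2), (16, 18), (25, 0), (24, 26), (25, 2), (0, 0), (29, 33), (28, 30), (29, 31), (30, 32), (31, 33), (28, 32)]
def wlk27 : (pairG (fT tbl27) (gT tbl27) 27).Walk (vtx 27 0) (vtx 27 0) :=
  (@Walk.cons _ _ (vtx 27 0) (vtx 27 16) _ (by decide) (@Walk.cons _ _ (vtx 27 16) (vtx 27 23) _ (by decide) (@Walk.cons _ _ (vtx 27 23) (vtx 27 18) _ (by decide) (@Walk.cons _ _ (vtx 27 18) (vtx 27 19) _ (by decide) (@Walk.cons _ _ (vtx 27 19) (vtx 27 20) _ (by decide) (@Walk.cons _ _ (vtx 27 20) (vtx 27 1) _ (by decide) (@Walk.cons _ _ (vtx 27 1) (vtx 27 6) _ (by decide) (@Walk.cons _ _ (vtx 27 6) (vtx 27 5) _ (by decide) (@Walk.cons _ _ (vtx 27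 5) (vtx 27 4) _ (by decide) (@Walk.cons _ _ (vtx 27 4) (vtx 27 9) _ (by decide) (@Walk.cons _ _ (vtx 27 9) (vtx 27 10) _ (by decide) (@Walk.cons _ _ (vtx 27 10) (vtx 27 3) _ (by decide) (@Walk.cons _ _ (vtx 27 3) (vtx 27 14) _ (by decide) (@Walk.cons _ _ (vtx 27 14) (vtx 27 15) _ (by decide) (@Walk.cons _ _ (vtx 27 15) (vtx 27 17) _ (by decide) (@Walk.cons _ _ (vtx 27 17) (vtx 27 21) _ (by decide) (@Walk.cons _ _ (vtx 27 21) (vtx 27 22) _ (by decide) (@Walk.cons _ _ (vtx 27 22) (vtx 27 2) _ (by decide) (@Walk.cons _ _ (vtx 27 2) (vtx 27 26) _ (by decide) (@Walk.cons _ _ (vtx 27 26) (vtx 27 25) _ (by decide) (@Walk.cons _ _ (vtx 27 25) (vtx 27 24) _ (by decide) (@Walk.cons _ _ (vtx 27 24) (vtx 27 0) _ (by decide) Walk.nil))))))))))))))))))))))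
lemma case27 : ∃ H, IsTwoFactor (P34.induce {w | w ≠ (27:Fin 34)}) H ∧
    ∃ (u : {w : Fin 34 // w ∈ {w : Fin 34 | w ≠ (27:Fin 34)}}) (p : H.Walk u u),
      p.IsCycle ∧ Even p.length := by
  refine ⟨pairG (fT tbl27) (gT tbl27) 27, good_twoFactor (by decide), vtx 27 0, wlk27, ?_, by decide⟩
  rw [Walk.isCycle_def, Walk.isTrail_def]
  exact ⟨by decide, fun h => absurd (congrArg Walk.length h) (by decide), by decide⟩

def tbl28 : List (Fin 34 × Fin 34) := [(16, 24), (20, 32), (12, 22), (10, 14), (5, 9), (4, 6), (5, 13), (8, 11), (7, 9), (4, 8), (11, 3), (7, 10), (13, 2), (6, 12), (15, 3), (14, 17), (23, 0), (15, 21), (19, 23), (18, 20), (19, 1), (17, 22), (21, 2), (16, 18), (33, 0), (26, 27), (25, 29), (25, 31), (0, 0), (26, 30), (29, 31), (27, 30), (33, 1), (24, 32)]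
def wlk28 : (pairG (fT tbl28) (gT tbl28) 28).Walk (vtx 28 0) (vtx 28 0) :=
  (@Walk.cons _ _ (vtx 28 0) (vtx 28 16) _ (by decide) (@Walk.cons _ _ (vtx 28 16) (vtx 28 23) _ (by decide) (@Walk.cons _ _ (vtx 28 23) (vtx 28 18) _ (by decide) (@Walk.cons _ _ (vtx 28 18) (vtx 28 19) _ (by decide) (@Walk.cons _ _ (vtx 28 19) (vtx 28 20) _ (by decide) (@Walk.cons _ _ (vtx 28 20) (vtx 28 1) _ (by decide) (@Walk.cons _ _ (vtx 28 1) (vtx 28 32) _ (by decide) (@Walk.cons _ _ (vtx 28 32) (vtx 28 33) _ (by decide) (@Walk.cons _ _ (vtx 28 33) (vtx 28 24) _ (by decide) (@Walk.cons _ _ (vtx 28 24) (vtx 28 0) _ (by decide) Walk.nil))))))))))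
lemma case28 : ∃ H, IsTwoFactor (P34.induce {w | w ≠ (28:Fin 34)}) H ∧
    ∃ (u : {w : Fin 34 // w ∈ {w : Fin 34 | w ≠ (28:Fin 34)}}) (p : H.Walk u u),
      p.IsCycle ∧ Even p.length := by
  refine ⟨pairG (fT tbl28) (gT tbl28) 28, good_twoFactor (by decide), vtx 28 0, wlk28, ?_, by decide⟩
  rw [Walk.isCycle_def, Walk.isTrail_def]
  exact ⟨by decide, fun h => absurd (congrArg Walk.length h) (by decide), by decide⟩

def tbl29 : List (Fin 34 × Fin 34) := [(16, 24), (20, 32), (12, 26), (10, 30), (5, 9), (4, 6), (5, 13), (8, 11), (7, 9), (4, 8), (11, 3), (7, 10), (13, 2), (6, 12), (15, 19), (14, 16), (15, 0), (18, 21), (17, 23), (14, 20), (19, 1), (17, 22), (21, 23), (18, 22), (25, 0), (24, 26), (25, 2), (28, 31), (27, 33), (0, 0), (31, 3), (27, 30), (33, 1), (28, 32)]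
def wlk29 : (pairG (fT tbl29) (gT tbl29) 29).Walk (vtx 29 0) (vtx 29 0) :=
  (@Walk.cons _ _ (vtx 29 0) (vtx 29 16) _ (by decide) (@Walk.cons _ _ (vtx 29 16) (vtx 29 15) _ (by decide) (@Walk.cons _ _ (vtx 29 15) (vtx 29 14) _ (by decide) (@Walk.cons _ _ (vtx 29 14) (vtx 29 19) _ (by decide) (@Walk.cons _ _ (vtx 29 19) (vtx 29 20) _ (by decide) (@Walk.cons _ _ (vtx 29 20) (vtx 29 1) _ (by decide) (@Walk.cons _ _ (vtx 29 1) (vtx 29 32) _ (by decide) (@Walk.cons _ _ (vtx 29 32) (vtx 29 33) _ (by decide) (@Walk.cons _ _ (vtx 29 33) (vtx 29 28) _ (by decide) (@Walk.cons _ _ (vtx 29 28) (vtx 29 27) _ (by decide) (@Walk.cons _ _ (vtx 29 27) (vtx 29 31) _ (by decide) (@Walk.cons _ _ (vtx 29 31) (vtx 29 30) _ (by decide) (@Walk.cons _ _ (vtx 29 30) (vtx 29 3) _ (by decide) (@Walk.cons _ _ (vtx 29 3) (vtx 29 10) _ (by decide) (@Walk.cons _ _ (vtx 29 10) (vtx 29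 11) _ (by decide) (@Walk.cons _ _ (vtx 29 11) (vtx 29 7) _ (by decide) (@Walk.cons _ _ (vtx 29 7) (vtx 29 8) _ (by decide) (@Walk.cons _ _ (vtx 29 8) (vtx 29 9) _ (by decide) (@Walk.cons _ _ (vtx 29 9) (vtx 29 4) _ (by decide) (@Walk.cons _ _ (vtx 29 4) (vtx 29 5) _ (by decide) (@Walk.cons _ _ (vtx 29 5) (vtx 29 6) _ (by decide) (@Walk.cons _ _ (vtx 29 6) (vtx 29 13) _ (by decide) (@Walk.cons _ _ (vtx 29 13) (vtx 29 12) _ (by decide) (@Walk.cons _ _ (vtx 29 12) (vtx 29 2) _ (by decide) (@Walk.cons _ _ (vtx 29 2) (vtx 29 26) _ (by decide) (@Walk.cons _ _ (vtx 29 26) (vtx 29 25) _ (by decide) (@Walk.cons _ _ (vtx 29 25) (vtx 29 24) _ (by decide) (@Walk.cons _ _ (vtx 29 24) (vtx 29 0) _ (by decide) Walk.nil))))))))))))))))))))))))))))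
lemma case29 : ∃ H, IsTwoFactor (P34.induce {w | w ≠ (29:Fin 34)}) H ∧
    ∃ (u : {w : Fin 34 // w ∈ {w : Fin 34 | w ≠ (29:Fin 34)}}) (p : H.Walk u u),
      p.IsCycle ∧ Even p.length := by
  refine ⟨pairG (fT tbl29) (gT tbl29) 29, good_twoFactor (by decide), vtx 29 0, wlk29, ?_, by decide⟩
  rw [Walk.isCycle_def, Walk.isTrail_def]
  exact ⟨by decide, fun h => absurd (congrArg Walk.length h) (by decide), by decide⟩

def tbl30 : List (Fin 34 × Fin 34) := [(16, 24), (20, 32), (12, 22), (10, 14), (5, 9), (4, 6), (5, 13), (8, 11), (7, 9), (4, 8), (11, 3), (7, 10), (13, 2), (6, 12), (15, 3), (14, 17), (23, 0), (15, 21), (19, 23), (18, 20), (19, 1), (17, 22), (21, 2), (16, 18), (33, 0), (26, 27), (25, 29), (25, 31), (29, 33), (26, 28), (0, 0), (27, 32), (31, 1), (24, 28)]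
def wlk30 : (pairG (fT tbl30) (gT tbl30) 30).Walk (vtx 30 0) (vtx 30 0) :=
  (@Walk.cons _ _ (vtx 30 0) (vtx 30 16) _ (by decide) (@Walk.cons _ _ (vtx 30 16) (vtx 30 23) _ (by decide) (@Walk.cons _ _ (vtx 30 23) (vtx 30 18) _ (by decide) (@Walk.cons _ _ (vtx 30 18) (vtx 30 19) _ (by decide) (@Walk.cons _ _ (vtx 30 19) (vtx 30 20) _ (by decide) (@Walk.cons _ _ (vtx 30 20) (vtx 30 1) _ (by decide) (@Walk.cons _ _ (vtx 30 1) (vtx 30 32) _ (by decide) (@Walk.cons _ _ (vtx 30 32) (vtx 30 31) _ (by decide) (@Walk.cons _ _ (vtx 30 31) (vtx 30 27) _ (by decide) (@Walk.cons _ _ (vtx 30 27) (vtx 30 25) _ (by decide) (@Walk.cons _ _ (vtx 30 25) (vtx 30 26) _ (by decide) (@Walk.cons _ _ (vtx 30 26) (vtx 30 29) _ (by decide) (@Walk.cons _ _ (vtx 30 29) (vtx 30 28) _ (by decide) (@Walk.cons _ _ (vtx 30 28) (vtx 30 33) _ (by decide) (@Walk.cons _ _ (vtx 30 33) (vtx 30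 24) _ (by decide) (@Walk.cons _ _ (vtx 30 24) (vtx 30 0) _ (by decide) Walk.nil))))))))))))))))
lemma case30 : ∃ H, IsTwoFactor (P34.induce {w | w ≠ (30:Fin 34)}) H ∧
    ∃ (u : {w : Fin 34 // w ∈ {w : Fin 34 | w ≠ (30:Fin 34)}}) (p : H.Walk u u),
      p.IsCycle ∧ Even p.length := by
  refine ⟨pairG (fT tbl30) (gT tbl30) 30, good_twoFactor (by decide), vtx 30 0, wlk30, ?_, by decide⟩
  rw [Walk.isCycle_def, Walk.isTrail_def]
  exact ⟨by decide, fun h => absurd (congrArg Walk.length h) (by decide), by decide⟩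

def tbl31 : List (Fin 34 × Fin 34) := [(16, 24), (20, 32), (12, 26), (10, 30), (5, 9), (4, 6), (5, 13), (8, 11), (7, 9), (4, 8), (11, 3), (7, 10), (13, 2), (6, 12), (15, 19), (14, 16), (15, 0), (18, 21), (17, 23), (14, 20), (19, 1), (17, 22), (21, 23), (18, 22), (33, 0), (26, 27), (25, 2), (25, 28), (27, 29), (28, 30), (29, 3), (0, 0), (33, 1), (24, 32)]
def wlk31 : (pairG (fT tbl31) (gT tbl31) 31).Walk (vtx 31 0) (vtx 31 0) :=
  (@Walk.cons _ _ (vtx 31 0) (vtx 31 16) _ (by decide) (@Walk.cons _ _ (vtx 31 16) (vtx 31 15) _ (by decide) (@Walk.cons _ _ (vtx 31 15) (vtx 31 14) _ (by decide) (@Walk.cons _ _ (vtx 31 14) (vtx 31 19) _ (by decide) (@Walk.cons _ _ (vtx 31 19) (vtx 31 20) _ (by decide) (@Walk.cons _ _ (vtx 31 20) (vtx 31 1) _ (by decide) (@Walk.cons _ _ (vtx 31 1) (vtx 31 32) _ (by decide) (@Walk.cons _ _ (vtx 31 32) (vtx 31 33) _ (by decide) (@Walk.cons _ _ (vtx 31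 33) (vtx 31 24) _ (by decide) (@Walk.cons _ _ (vtx 31 24) (vtx 31 0) _ (by decide) Walk.nil))))))))))
lemma case31 : ∃ H, IsTwoFactor (P34.induce {w | w ≠ (31:Fin 34)}) H ∧
    ∃ (u : {w : Fin 34 // w ∈ {w : Fin 34 | w ≠ (31:Fin 34)}}) (p : H.Walk u u),
      p.IsCycle ∧ Even p.length := by
  refine ⟨pairG (fT tbl31) (gT tbl31) 31, good_twoFactor (by decide), vtx 31 0, wlk31, ?_, by decide⟩
  rw [Walk.isCycle_def, Walk.isTrail_def]
  exact ⟨by decide, fun h => absurd (congrArg Walk.length h) (by decide), by decide⟩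

def tbl32 : List (Fin 34 × Fin 34) := [(16, 24), (6, 20), (22, 26), (10, 14), (5, 9), (4, 6), (5, 1), (8, 11), (7, 13), (4, 10), (9, 3), (7, 12), (11, 13), (8, 12), (15, 3), (14, 17), (23, 0), (15, 21), (19, 23), (18, 20), (19, 1), (17, 22), (21, 2), (16, 18), (33, 0), (26, 27), (25, 2), (25, 31), (29, 33), (28, 30), (29, 31), (27, 30), (0, 0), (24, 28)]
def wlk32 : (pairG (fT tbl32) (gT tbl32) 32).Walk (vtx 32 0) (vtx 32 0) :=
  (@Walk.cons _ _ (vtx 32 0) (vtx 32 16) _ (by decide) (@Walk.cons _ _ (vtx 32 16) (vtx 32 23) _ (by decide) (@Walk.cons _ _ (vtx 32 23) (vtx 32 18) _ (by decide) (@Walk.cons _ _ (vtx 32 18) (vtx 32 19) _ (by decide) (@Walk.cons _ _ (vtx 32 19) (vtx 32 20) _ (by decide) (@Walk.cons _ _ (vtx 32 20) (vtx 32 1) _ (by decide) (@Walk.cons _ _ (vtx 32 1) (vtx 32 6) _ (by decide) (@Walk.cons _ _ (vtx 32 6) (vtx 32 5) _ (by decide) (@Walk.cons _ _ (vtx 32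 5) (vtx 32 4) _ (by decide) (@Walk.cons _ _ (vtx 32 4) (vtx 32 9) _ (by decide) (@Walk.cons _ _ (vtx 32 9) (vtx 32 10) _ (by decide) (@Walk.cons _ _ (vtx 32 10) (vtx 32 3) _ (by decide) (@Walk.cons _ _ (vtx 32 3) (vtx 32 14) _ (by decide) (@Walk.cons _ _ (vtx 32 14) (vtx 32 15) _ (by decide) (@Walk.cons _ _ (vtx 32 15) (vtx 32 17) _ (by decide) (@Walk.cons _ _ (vtx 32 17) (vtx 32 21) _ (by decide) (@Walk.cons _ _ (vtx 32 21) (vtx 32 22) _ (by decide) (@Walk.cons _ _ (vtx 32 22) (vtx 32 2) _ (by decide) (@Walk.cons _ _ (vtx 32 2) (vtx 32 26) _ (by decide) (@Walk.cons _ _ (vtx 32 26) (vtx 32 25) _ (by decide) (@Walk.cons _ _ (vtx 32 25) (vtx 32 27) _ (by decide) (@Walk.cons _ _ (vtx 32 27) (vtx 32 31) _ (by decide) (@Walk.cons _ _ (vtx 32 31) (vtx 32 30) _ (by decide) (@Walk.cons _ _ (vtx 32 30) (vtx 32 29) _ (by decide) (@Walk.cons _ _ (vtx 32 29) (vtx 32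 28) _ (by decide) (@Walk.cons _ _ (vtx 32 28) (vtx 32 33) _ (by decide) (@Walk.cons _ _ (vtx 32 33) (vtx 32 24) _ (by decide) (@Walk.cons _ _ (vtx 32 24) (vtx 32 0) _ (by decide) Walk.nil))))))))))))))))))))))))))))
lemma case32 : ∃ H, IsTwoFactor (P34.induce {w | w ≠ (32:Fin 34)}) H ∧
    ∃ (u : {w : Fin 34 // w ∈ {w : Fin 34 | w ≠ (32:Fin 34)}}) (p : H.Walk u u),
      p.IsCycle ∧ Even p.length := by
  refine ⟨pairG (fT tbl32) (gT tbl32) 32, good_twoFactor (by decide), vtx 32 0, wlk32, ?_, by decide⟩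
  rw [Walk.isCycle_def, Walk.isTrail_def]
  exact ⟨by decide, fun h => absurd (congrArg Walk.length h) (by decide), by decide⟩

def tbl33 : List (Fin 34 × Fin 34) := [(16, 24), (20, 32), (12, 26), (10, 30), (5, 9), (4, 6), (5, 13), (8, 11), (7, 9), (4, 8), (11, 3), (7, 10), (13, 2), (6, 12), (15, 19), (14, 16), (15, 0), (18, 21), (17, 23), (14, 20), (19, 1), (17, 22), (21, 23), (18, 22), (25, 0), (24, 26), (25, 2), (28, 31), (27, 29), (28, 30), (29, 3), (27, 32), (31, 1), (0, 0)]
def wlk33 : (pairG (fT tbl33) (gT tbl33) 33).Walk (vtx 33 0) (vtx 33 0) :=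
  (@Walk.cons _ _ (vtx 33 0) (vtx 33 16) _ (by decide) (@Walk.cons _ _ (vtx 33 16) (vtx 33 15) _ (by decide) (@Walk.cons _ _ (vtx 33 15) (vtx 33 14) _ (by decide) (@Walk.cons _ _ (vtx 33 14) (vtx 33 19) _ (by decide) (@Walk.cons _ _ (vtx 33 19) (vtx 33 20) _ (by decide) (@Walk.cons _ _ (vtx 33 20) (vtx 33 1) _ (by decide) (@Walk.cons _ _ (vtx 33 1) (vtx 33 32) _ (by decide) (@Walk.cons _ _ (vtx 33 32) (vtx 33 31) _ (by decide) (@Walk.cons _ _ (vtx 33 31) (vtx 33 27) _ (by decide) (@Walk.cons _ _ (vtx 33 27) (vtx 33 28) _ (by decide) (@Walk.cons _ _ (vtx 33 28) (vtx 33 29) _ (by decide) (@Walk.cons _ _ (vtx 33 29) (vtx 33 30) _ (by decide) (@Walk.cons _ _ (vtx 33 30) (vtx 33 3) _ (by decide) (@Walk.cons _ _ (vtx 33 3) (vtx 33 10) _ (by decide) (@Walk.cons _ _ (vtx 33 10) (vtx 33 11) _ (by decide) (@Walk.cons _ _ (vtx 33 11) (vtx 33 7) _ (by decide) (@Walk.cons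 _ _ (vtx 33 7) (vtx 33 8) _ (by decide) (@Walk.cons _ _ (vtx 33 8) (vtx 33 9) _ (by decide) (@Walk.cons _ _ (vtx 33 9) (vtx 33 4) _ (by decide) (@Walk.cons _ _ (vtx 33 4) (vtx 33 5) _ (by decide) (@Walk.cons _ _ (vtx 33 5) (vtx 33 6) _ (by decide) (@Walk.cons _ _ (vtx 33 6) (vtx 33 13) _ (by decide) (@Walk.cons _ _ (vtx 33 13) (vtx 33 12) _ (by decide) (@Walk.cons _ _ (vtx 33 12) (vtx 33 2) _ (by decide) (@Walk.cons _ _ (vtx 33 2) (vtx 33 26) _ (by decide) (@Walk.cons _ _ (vtx 33 26) (vtx 33 25) _ (by decide) (@Walk.cons _ _ (vtx 33 25) (vtx 33 24) _ (by decide) (@Walk.cons _ _ (vtx 33 24) (vtx 33 0) _ (by decide) Walk.nil))))))))))))))))))))))))))))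
lemma case33 : ∃ H, IsTwoFactor (P34.induce {w | w ≠ (33:Fin 34)}) H ∧
    ∃ (u : {w : Fin 34 // w ∈ {w : Fin 34 | w ≠ (33:Fin 34)}}) (p : H.Walk u u),
      p.IsCycle ∧ Even p.length := by
  refine ⟨pairG (fT tbl33) (gT tbl33) 33, good_twoFactor (by decide), vtx 33 0, wlk33, ?_, by decide⟩
  rw [Walk.isCycle_def, Walk.isTrail_def]
  exact ⟨by decide, fun h => absurd (congrArg Walk.length h) (by decide), by decide⟩

lemma P34_main : ∀ v : Fin 34, ∃ H, IsTwoFactor (P34.induce {w | w ≠ v}) H ∧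
    ∃ (u : {w : Fin 34 // w ∈ {w | w ≠ v}}) (p : H.Walk u u),
      p.IsCycle ∧ Even p.length := by
  intro v
  fin_cases v
  · exact case0
  · exact case1
  · exact case2
  · exact case3
  · exact case4
  · exact case5
  · exact case6
  · exact case7
  · exact case8
  · exact case9
  · exact case10
  · exact case11
  · exact case12
  · exact case13
  · exact case14
  · exact case15
  · exact case16
  · exact case17
  · exact case18
  · exact case19
  · exact case20
  · exact case21
  · exact case22
  · exact case23
  · exact case24
  · exact case25
  · exact case26
  · exact case27
  · exact case28
  · exact case29
  · exact case30
  · exact case31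
  · exact case32
  · exact case33

/-- The snark `P34` has no bold-edge; equivalently, for every
vertex `v` of `P34` there is a 2-factor of `P34 − v` containing a cycle of even
length. -/
theorem P34_no_boldEdge :
    (∀ x y : Fin 34, ¬ IsBoldEdge P34 x y) ∧
    (∀ v : Fin 34, ∃ H, IsTwoFactor (P34.induce {w | w ≠ v}) H ∧
      ∃ (u : {w : Fin 34 // w ∈ {w | w ≠ v}}) (p : H.Walk u u),
        p.IsCycle ∧ Even p.length) := by
  refine ⟨?_, P34_main⟩
  intro x y hb
  obtain ⟨H, htf, u, p, hc, he⟩ := P34_main x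
  exact (Nat.not_odd_iff_even.mpr he) (hb.2.1 H htf u p hc)
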